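/- Let P₁ = X³ + 2X²Z + 4XZ² + 8Z³ + 4XYW + 8YZW and P₂ = X³ + 2Y³ + 6XZ² + 4Z³ + 12YZW + 2W³ in ℤ[X,Y,Z,W]. Then P₁ ≠ P₂, and with X = θ^{(3,d)}_{0,0}, Y = θ^{(3,d)}_{1,0}, Z = θ^{(3,d)}_{0,1}, W = θ^{(3,d)}_{1,1}: for d = 3 (level ℓ = 11) one has P₁(X,Y,Z,W) = P₂(X,Y,Z,W) in ℤ[[q]], while for d = 6 (level ℓ = 23) one has P₁(X,Y,Z,W) ≠ P₂(X,Y,Z,W). -/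

import Mathlib

noncomputable section

/-- The positive definite quadratic form `Q_d(x,y) = x² + xy + d y²`. -/
def Qform (d : ℕ) (x y : ℤ) : ℤ := x ^ 2 + x * y + (d : ℤ) * y ^ 2

/-- The coset theta series `θ^{(p,d)}_{a,b}`. -/
def cosetTheta (p d : ℕ) (a b : ℤ) : PowerSeries ℤ :=
  PowerSeries.mk fun k =>
    (Set.ncard {mn : ℤ × ℤ |
      Qform d ((p : ℤ) * mn.1 + a) ((p : ℤ) * mn.2 + b) = (k : ℤ)} : ℤ)

/-- The four coset theta series for `p = 3`:
`X = θ_{0,0}`, `Y = θ_{1,0}`, `Z = θ_{0,1}`, `W = θ_{1,1}`. -/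
def T3 (d : ℕ) : Fin 4 → PowerSeries ℤ :=
  ![cosetTheta 3 d 0 0, cosetTheta 3 d 1 0, cosetTheta 3 d 0 1, cosetTheta 3 d 1 1]

open MvPolynomial in
/-- `P₁ = X³ + 2X²Z + 4XZ² + 8Z³ + 4XYW + 8YZW`. -/
def P1 : MvPolynomial (Fin 4) ℤ :=
  X 0 ^ 3 + 2 * X 0 ^ 2 * X 2 + 4 * X 0 * X 2 ^ 2 + 8 * X 2 ^ 3 +
    4 * X 0 * X 1 * X 3 + 8 * X 1 * X 2 * X 3

open MvPolynomial in
/-- `P₂ = X³ + 2Y³ + 6XZ² + 4Z³ + 12YZW + 2W³`. -/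
def P2 : MvPolynomial (Fin 4) ℤ :=
  X 0 ^ 3 + 2 * X 1 ^ 3 + 6 * X 0 * X 2 ^ 2 + 4 * X 2 ^ 3 +
    12 * X 1 * X 2 * X 3 + 2 * X 3 ^ 3


-- ============ auxiliary development ============

abbrev Vpt : Type := ℤ × ℤ
abbrev V6 : Type := Vpt × Vpt × Vpt

lemma Qform_nonneg {d : ℕ} (hd : 1 ≤ d) (x y : ℤ) : 0 ≤ Qform d x y := by
  have hd' : (1:ℤ) ≤ (d:ℤ) := by exact_mod_cast hd
  unfold Qform
  nlinarith [sq_nonneg (2*x+y), sq_nonneg y]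

lemma Qform_sublevel_finite {d : ℕ} (hd : 1 ≤ d) (k : ℤ) :
    {x : Vpt | Qform d x.1 x.2 ≤ k}.Finite := by
  have hd' : (1:ℤ) ≤ (d:ℤ) := by exact_mod_cast hd
  apply Set.Finite.subset (Set.finite_Icc ((-(k+1), -(k+1)) : Vpt) ((k+1, k+1) : Vpt))
  rintro ⟨x, y⟩ h
  simp only [Set.mem_setOf_eq, Qform] at h
  simp only [Set.mem_Icc, Prod.mk_le_mk]
  have h1 : x * x ≤ 2 * k := by nlinarith [sq_nonneg (x + y), sq_nonneg y]
  have h2 : y * y ≤ 2 * k := by nlinarith [sq_nonneg (x + y), sq_nonneg x]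
  have hx1 : x ≤ k + 1 := by nlinarith [sq_nonneg (x - 1)]
  have hx2 : -(k+1) ≤ x := by nlinarith [sq_nonneg (x + 1)]
  have hy1 : y ≤ k + 1 := by nlinarith [sq_nonneg (y - 1)]
  have hy2 : -(k+1) ≤ y := by nlinarith [sq_nonneg (y + 1)]
  exact ⟨⟨hx2, hy2⟩, hx1, hy1⟩

lemma ct_congr (d : ℕ) (a b a' b' : ℤ) (g gi : ℤ × ℤ → ℤ × ℤ)
    (hgi : ∀ v, g (gi v) = v)
    (hig : ∀ v, gi (g v) = v)
    (hQ : ∀ v : ℤ × ℤ, Qform d (3 * (g v).1 + a') (3 * (g v).2 + b')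
        = Qform d (3 * v.1 + a) (3 * v.2 + b)) :
    cosetTheta 3 d a b = cosetTheta 3 d a' b' := by
  unfold cosetTheta
  ext k
  simp only [PowerSeries.coeff_mk, Nat.cast_ofNat]
  congr 1
  have himg : {mn : ℤ × ℤ | Qform d (3 * mn.1 + a') (3 * mn.2 + b') = (k : ℤ)}
      = g '' {mn : ℤ × ℤ | Qform d (3 * mn.1 + a) (3 * mn.2 + b) = (k : ℤ)} := by
    ext v
    simp only [Set.mem_setOf_eq, Set.mem_image]
    constructor
    · intro hv
      exact ⟨gi v, by rw [← hQ (gi v), hgi v]; exact hv, hgi v⟩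
    · rintro ⟨w, hw, rfl⟩
      rw [hQ w]; exact hw
  rw [himg, Set.ncard_image_of_injective _ (Function.LeftInverse.injective hig)]



lemma ct20 (d : ℕ) : cosetTheta 3 d 2 0 = cosetTheta 3 d 1 0 := by
  refine ct_congr d 2 0 1 0 (fun v => (-v.1 - 1, -v.2)) (fun v => (-v.1 - 1, -v.2)) ?_ ?_ ?_
  · intro v; simp only [Prod.ext_iff]; constructor <;> ring
  · intro v; simp only [Prod.ext_iff]; constructor <;> ring
  · intro v; simp only [Qform]; ring

lemma ct02 (d : ℕ) : cosetTheta 3 d 0 2 = cosetTheta 3 d 0 1 := by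
  refine ct_congr d 0 2 0 1 (fun v => (-v.1, -v.2 - 1)) (fun v => (-v.1, -v.2 - 1)) ?_ ?_ ?_
  · intro v; simp only [Prod.ext_iff]; constructor <;> ring
  · intro v; simp only [Prod.ext_iff]; constructor <;> ring
  · intro v; simp only [Qform]; ring

lemma ct21 (d : ℕ) : cosetTheta 3 d 2 1 = cosetTheta 3 d 0 1 := by
  refine ct_congr d 2 1 0 1 (fun v => (-v.1 - v.2 - 1, v.2)) (fun v => (-v.1 - v.2 - 1, v.2)) ?_ ?_ ?_
  · intro v; simp only [Prod.ext_iff, and_true]; ring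
  · intro v; simp only [Prod.ext_iff, and_true]; ring
  · intro v; simp only [Qform]; ring

lemma ct12 (d : ℕ) : cosetTheta 3 d 1 2 = cosetTheta 3 d 2 1 := by
  refine ct_congr d 1 2 2 1 (fun v => (-v.1 - 1, -v.2 - 1)) (fun v => (-v.1 - 1, -v.2 - 1)) ?_ ?_ ?_
  · intro v; simp only [Prod.ext_iff]; constructor <;> ring
  · intro v; simp only [Prod.ext_iff]; constructor <;> ring
  · intro v; simp only [Qform]; ring

lemma ct22 (d : ℕ) : cosetTheta 3 d 2 2 = cosetTheta 3 d 1 1 := by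
  refine ct_congr d 2 2 1 1 (fun v => (-v.1 - 1, -v.2 - 1)) (fun v => (-v.1 - 1, -v.2 - 1)) ?_ ?_ ?_
  · intro v; simp only [Prod.ext_iff]; constructor <;> ring
  · intro v; simp only [Prod.ext_iff]; constructor <;> ring
  · intro v; simp only [Qform]; ring







lemma ncard_sprod {α β : Type} (s : Set α) (t : Set β) :
    (s ×ˢ t).ncard = s.ncard * t.ncard := by
  rw [← Nat.card_coe_set_eq, ← Nat.card_coe_set_eq, ← Nat.card_coe_set_eq,
    Nat.card_congr (Equiv.Set.prod s t), Nat.card_prod]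

lemma ncard_biUnion {ι α : Type} [DecidableEq ι] (s : Finset ι) (t : ι → Set α)
    (hfin : ∀ i ∈ s, (t i).Finite)
    (hdis : ∀ i ∈ s, ∀ j ∈ s, i ≠ j → Disjoint (t i) (t j)) :
    (⋃ i ∈ s, t i).ncard = ∑ i ∈ s, (t i).ncard := by
  classical
  induction s using Finset.induction_on with
  | empty => simp
  | insert _ _ ha ih =>
    rename_i a s
    rw [Finset.sum_insert ha, Finset.set_biUnion_insert]
    have hdisj : Disjoint (t a) (⋃ i ∈ s, t i) := by
      simp only [Set.disjoint_iUnion_right]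
      intro i hi
      exact hdis a (Finset.mem_insert_self a s) i (Finset.mem_insert_of_mem hi)
        (fun h => ha (h ▸ hi))
    rw [Set.ncard_union_eq hdisj (hfin a (Finset.mem_insert_self a s))
      (Set.Finite.biUnion s.finite_toSet (fun i hi => hfin i (Finset.mem_insert_of_mem hi)))]
    rw [ih (fun i hi => hfin i (Finset.mem_insert_of_mem hi))
      (fun i hi j hj hij => hdis i (Finset.mem_insert_of_mem hi) j (Finset.mem_insert_of_mem hj) hij)]

lemma mulCount {α β : Type} (D : Set α) (E : Set β) (φ : α → ℤ) (ψ : β → ℤ)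
    (hD : ∀ k : ℕ, {a | a ∈ D ∧ φ a = (k : ℤ)}.Finite)
    (hE : ∀ k : ℕ, {b | b ∈ E ∧ ψ b = (k : ℤ)}.Finite)
    (hφ : ∀ a ∈ D, 0 ≤ φ a) (hψ : ∀ b ∈ E, 0 ≤ ψ b) :
    (PowerSeries.mk fun k => ({a | a ∈ D ∧ φ a = (k : ℤ)}.ncard : ℤ)) *
      (PowerSeries.mk fun k => ({b | b ∈ E ∧ ψ b = (k : ℤ)}.ncard : ℤ))
    = PowerSeries.mk fun k =>
        ({x : α × β | (x.1 ∈ D ∧ x.2 ∈ E) ∧ φ x.1 + ψ x.2 = (k : ℤ)}.ncard : ℤ) := by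
  classical
  ext k
  rw [PowerSeries.coeff_mk, PowerSeries.coeff_mul]
  have key : {x : α × β | (x.1 ∈ D ∧ x.2 ∈ E) ∧ φ x.1 + ψ x.2 = (k : ℤ)}
      = ⋃ p ∈ Finset.HasAntidiagonal.antidiagonal k,
          ({a | a ∈ D ∧ φ a = (p.1 : ℤ)} ×ˢ {b | b ∈ E ∧ ψ b = (p.2 : ℤ)}) := by
    ext x
    simp only [Set.mem_setOf_eq, Set.mem_iUnion, Set.mem_prod, Finset.HasAntidiagonal.mem_antidiagonal,
      exists_prop]
    constructor
    · rintro ⟨⟨h1, h2⟩, h3⟩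
      have o1 := hφ x.1 h1
      have o2 := hψ x.2 h2
      exact ⟨((φ x.1).toNat, (ψ x.2).toNat), by omega, ⟨h1, by omega⟩, ⟨h2, by omega⟩⟩
    · rintro ⟨p, hp, ⟨h1, h2⟩, h3, h4⟩
      exact ⟨⟨h1, h3⟩, by omega⟩
  rw [key, ncard_biUnion _ _ ?fin ?dis]
  · push_cast
    apply Finset.sum_congr rfl
    intro p _
    rw [ncard_sprod]
    push_cast
    rw [PowerSeries.coeff_mk, PowerSeries.coeff_mk]
  case fin =>
    intro p _
    exact Set.Finite.prod (hD p.1) (hE p.2)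
  case dis =>
    intro p _ q _ hpq
    rw [Set.disjoint_left]
    rintro ⟨x1, x2⟩ ⟨⟨_, h1⟩, _, h2⟩ ⟨⟨_, h3⟩, _, h4⟩
    apply hpq
    have : p.1 = q.1 := by omega
    have : p.2 = q.2 := by omega
    exact Prod.ext ‹p.1 = q.1› ‹p.2 = q.2›



def Dp (a b : ℤ) : Set Vpt := {x | x.1 % 3 = a ∧ x.2 % 3 = b}
def Qf (d : ℕ) : Vpt → ℤ := fun x => Qform d x.1 x.2
def qV (d : ℕ) (v : V6) : ℤ := Qf d v.1 + Qf d v.2.1 + Qf d v.2.2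


lemma Qf_nonneg {d : ℕ} (hd : 1 ≤ d) (x : Vpt) : 0 ≤ Qf d x := Qform_nonneg hd x.1 x.2

lemma fibD_finite {d : ℕ} (hd : 1 ≤ d) (a b : ℤ) (k : ℕ) :
    {x | x ∈ Dp a b ∧ Qf d x = (k : ℤ)}.Finite := by
  apply Set.Finite.subset (Qform_sublevel_finite hd (k : ℤ))
  rintro x ⟨_, hx⟩
  simp only [Set.mem_setOf_eq]
  exact le_of_eq hx

lemma fibE_finite {d : ℕ} (hd : 1 ≤ d) (a2 b2 a3 b3 : ℤ) (k : ℕ) :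
    {x : Vpt × Vpt | x ∈ {y : Vpt × Vpt | y.1 ∈ Dp a2 b2 ∧ y.2 ∈ Dp a3 b3} ∧
      (Qf d x.1 + Qf d x.2) = (k : ℤ)}.Finite := by
  apply Set.Finite.subset
    (Set.Finite.prod (Qform_sublevel_finite hd (k : ℤ)) (Qform_sublevel_finite hd (k : ℤ)))
  rintro ⟨x, y⟩ ⟨-, hx⟩
  have h1 : 0 ≤ Qform d x.1 x.2 := Qf_nonneg hd x
  have h2 : 0 ≤ Qform d y.1 y.2 := Qf_nonneg hd y
  have hx' : Qform d x.1 x.2 + Qform d y.1 y.2 = (k : ℤ) := hx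
  constructor
  · show Qform d x.1 x.2 ≤ (k:ℤ); omega
  · show Qform d y.1 y.2 ≤ (k:ℤ); omega

lemma ct_as_mk (d : ℕ) (a b : ℤ) (ha : 0 ≤ a) (ha3 : a < 3) (hb : 0 ≤ b) (hb3 : b < 3) :
    cosetTheta 3 d a b
    = PowerSeries.mk fun k => (({x | x ∈ Dp a b ∧ Qf d x = (k : ℤ)}).ncard : ℤ) := by
  unfold cosetTheta
  ext k
  simp only [PowerSeries.coeff_mk, Nat.cast_ofNat]
  congr 1
  have himg : {x | x ∈ Dp a b ∧ Qf d x = (k : ℤ)}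
      = (fun mn : ℤ × ℤ => ((3 * mn.1 + a, 3 * mn.2 + b) : Vpt)) ''
        {mn : ℤ × ℤ | Qform d (3 * mn.1 + a) (3 * mn.2 + b) = (k : ℤ)} := by
    ext ⟨x, y⟩
    simp only [Dp, Qf, Set.mem_setOf_eq, Set.mem_image, Prod.mk.injEq]
    constructor
    · rintro ⟨⟨h1, h2⟩, hQ⟩
      refine ⟨((x - a) / 3, (y - b) / 3), ?_, by omega, by omega⟩
      have e1 : 3 * ((x - a) / 3) + a = x := by omega
      have e2 : 3 * ((y - b) / 3) + b = y := by omega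
      rw [e1, e2]; exact hQ
    · rintro ⟨⟨m, n⟩, hmn, rfl, rfl⟩
      exact ⟨⟨by omega, by omega⟩, hmn⟩
  rw [himg, Set.ncard_image_of_injective]
  intro p q h
  simp only [Prod.mk.injEq] at h
  exact Prod.ext (by omega) (by omega)

lemma word_series (d : ℕ) (hd : 1 ≤ d) (a1 b1 a2 b2 a3 b3 : ℤ)
    (h1 : 0 ≤ a1 ∧ a1 < 3 ∧ 0 ≤ b1 ∧ b1 < 3)
    (h2 : 0 ≤ a2 ∧ a2 < 3 ∧ 0 ≤ b2 ∧ b2 < 3)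
    (h3 : 0 ≤ a3 ∧ a3 < 3 ∧ 0 ≤ b3 ∧ b3 < 3) :
    cosetTheta 3 d a1 b1 * cosetTheta 3 d a2 b2 * cosetTheta 3 d a3 b3
    = PowerSeries.mk fun k =>
        (({v : V6 | (v.1.1 % 3 = a1 ∧ v.1.2 % 3 = b1 ∧ v.2.1.1 % 3 = a2 ∧ v.2.1.2 % 3 = b2 ∧
            v.2.2.1 % 3 = a3 ∧ v.2.2.2 % 3 = b3) ∧ qV d v = (k : ℤ)}).ncard : ℤ) := by
  obtain ⟨c1, c2, c3, c4⟩ := h1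
  obtain ⟨e1, e2, e3, e4⟩ := h2
  obtain ⟨f1, f2, f3, f4⟩ := h3
  rw [mul_assoc, ct_as_mk d a1 b1 c1 c2 c3 c4, ct_as_mk d a2 b2 e1 e2 e3 e4,
    ct_as_mk d a3 b3 f1 f2 f3 f4]
  rw [mulCount (Dp a2 b2) (Dp a3 b3) (Qf d) (Qf d) (fibD_finite hd a2 b2) (fibD_finite hd a3 b3)
    (fun x _ => Qf_nonneg hd x) (fun x _ => Qf_nonneg hd x)]
  have hmem : (PowerSeries.mk fun k =>
      (({x : Vpt × Vpt | (x.1 ∈ Dp a2 b2 ∧ x.2 ∈ Dp a3 b3) ∧ Qf d x.1 + Qf d x.2 = (k : ℤ)}).ncard : ℤ))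
      = (PowerSeries.mk fun k =>
      (({b : Vpt × Vpt | b ∈ {y : Vpt × Vpt | y.1 ∈ Dp a2 b2 ∧ y.2 ∈ Dp a3 b3} ∧
        (fun y : Vpt × Vpt => Qf d y.1 + Qf d y.2) b = (k : ℤ)}).ncard : ℤ)) := rfl
  rw [hmem]
  rw [mulCount (Dp a1 b1) ({y : Vpt × Vpt | y.1 ∈ Dp a2 b2 ∧ y.2 ∈ Dp a3 b3})
    (Qf d) (fun y => Qf d y.1 + Qf d y.2) (fibD_finite hd a1 b1)
    (fibE_finite hd a2 b2 a3 b3)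
    (fun x _ => Qf_nonneg hd x)
    (fun y _ => add_nonneg (Qf_nonneg hd y.1) (Qf_nonneg hd y.2))]
  ext k
  simp only [PowerSeries.coeff_mk]
  congr 1
  apply congrArg
  ext v
  simp only [Dp, Set.mem_setOf_eq, qV]
  constructor
  · rintro ⟨⟨⟨g1, g2⟩, ⟨g3, g4⟩, g5, g6⟩, h⟩
    exact ⟨⟨g1, g2, g3, g4, g5, g6⟩, by linarith⟩
  · rintro ⟨⟨g1, g2, g3, g4, g5, g6⟩, h⟩
    exact ⟨⟨⟨g1, g2⟩, ⟨g3, g4⟩, g5, g6⟩, by linarith⟩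


lemma qV_sublevel_finite {d : ℕ} (hd : 1 ≤ d) (k : ℤ) :
    {v : V6 | qV d v ≤ k}.Finite := by
  apply Set.Finite.subset ((Qform_sublevel_finite hd k).prod
    ((Qform_sublevel_finite hd k).prod (Qform_sublevel_finite hd k)))
  rintro ⟨a, b, c⟩ h
  simp only [Set.mem_setOf_eq, qV] at h
  have h1 : 0 ≤ Qform d a.1 a.2 := Qform_nonneg hd a.1 a.2
  have h2 : 0 ≤ Qform d b.1 b.2 := Qform_nonneg hd b.1 b.2
  have h3 : 0 ≤ Qform d c.1 c.2 := Qform_nonneg hd c.1 c.2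
  have hq : Qform d a.1 a.2 + Qform d b.1 b.2 + Qform d c.1 c.2 ≤ k := h
  refine ⟨?_, ?_, ?_⟩ <;> simp only [Set.mem_setOf_eq] <;> omega

lemma ncard_split {d : ℕ} (hd : 1 ≤ d) (P Q : V6 → Prop) (k : ℕ)
    (h : ∀ v, P v → Q v → False) :
    ({v : V6 | (P v ∨ Q v) ∧ qV d v = (k : ℤ)}).ncard
    = ({v : V6 | P v ∧ qV d v = (k : ℤ)}).ncard
      + ({v : V6 | Q v ∧ qV d v = (k : ℤ)}).ncard := by
  have hu : {v : V6 | (P v ∨ Q v) ∧ qV d v = (k : ℤ)}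
      = {v : V6 | P v ∧ qV d v = (k : ℤ)} ∪ {v : V6 | Q v ∧ qV d v = (k : ℤ)} := by
    ext v; simp only [Set.mem_setOf_eq, Set.mem_union]; tauto
  have hfin : ∀ (R : V6 → Prop), {v : V6 | R v ∧ qV d v = (k : ℤ)}.Finite := by
    intro R
    apply Set.Finite.subset (qV_sublevel_finite hd (k : ℤ))
    rintro v ⟨-, hv⟩
    simp only [Set.mem_setOf_eq]; omega
  rw [hu, Set.ncard_union_eq ?_ (hfin P) (hfin Q)]
  rw [Set.disjoint_left]
  rintro v ⟨hp, -⟩ ⟨hq, -⟩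
  exact h v hp hq

lemma split3 {d : ℕ} (hd : 1 ≤ d) (P : V6 → Prop) (f : V6 → ℤ) (k : ℕ) :
    ({v : V6 | P v ∧ qV d v = (k : ℤ)}).ncard
    = ({v : V6 | (P v ∧ f v % 3 = 0) ∧ qV d v = (k : ℤ)}).ncard
      + ({v : V6 | (P v ∧ f v % 3 = 1) ∧ qV d v = (k : ℤ)}).ncard
      + ({v : V6 | (P v ∧ f v % 3 = 2) ∧ qV d v = (k : ℤ)}).ncard := by
  have e : {v : V6 | P v ∧ qV d v = (k : ℤ)}
      = {v : V6 | ((P v ∧ f v % 3 = 0) ∨ ((P v ∧ f v % 3 = 1) ∨ (P v ∧ f v % 3 = 2))) ∧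
          qV d v = (k : ℤ)} := by
    ext v
    simp only [Set.mem_setOf_eq]
    constructor
    · rintro ⟨hp, hq⟩
      have h3 : f v % 3 = 0 ∨ f v % 3 = 1 ∨ f v % 3 = 2 := by omega
      exact ⟨by tauto, hq⟩
    · rintro ⟨h, hq⟩
      exact ⟨by tauto, hq⟩
  rw [e, ncard_split hd _ _ k (by rintro v ⟨-, h0⟩ h12; rcases h12 with ⟨-, h1⟩ | ⟨-, h2⟩ <;> omega),
    ncard_split hd _ _ k (by rintro v ⟨-, h1⟩ ⟨-, h2⟩; omega), add_assoc]



lemma T3_0 (d : ℕ) : T3 d 0 = cosetTheta 3 d 0 0 := rfl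
lemma T3_1 (d : ℕ) : T3 d 1 = cosetTheta 3 d 1 0 := rfl
lemma T3_2 (d : ℕ) : T3 d 2 = cosetTheta 3 d 0 1 := rfl
lemma T3_3 (d : ℕ) : T3 d 3 = cosetTheta 3 d 1 1 := rfl


def PC1c (v : V6) : Prop := (v.2.1.2 + v.2.2.1 + 2 * v.2.2.2) % 3 = 0 ∧ (v.2.1.1 + v.2.2.1) % 3 = 0 ∧ (v.1.1) % 3 = 0

def PC2c (v : V6) : Prop := (v.2.1.1 + 2 * v.2.2.1) % 3 = 0 ∧ (v.1.2 + 2 * v.2.1.2 + 2 * v.2.2.2) % 3 = 0 ∧ (v.1.1 + v.2.1.2 + 2 * v.2.2.1 + v.2.2.2) % 3 = 0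

def Mmap (v : V6) : V6 :=
  (((v.1.1 + 3 * v.1.2 + v.2.1.1 - 3 * v.2.1.2 + v.2.2.1), (- v.1.1 + v.2.1.1 + 2 * v.2.1.2 + v.2.2.2)), ((3 * v.1.2 - v.2.1.1 + 2 * v.2.1.2 + v.2.2.1 - 2 * v.2.2.2), (v.1.1 + v.2.1.1 + v.2.1.2 - v.2.2.1 - v.2.2.2)), ((3 * v.1.2 - v.2.1.1 - v.2.1.2 - 2 * v.2.2.1 + v.2.2.2), (v.1.1 + v.2.1.2 + v.2.2.1 + 2 * v.2.2.2)))

def Nmap (v : V6) : V6 :=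
  (((- 3 * v.1.2 + 3 * v.2.1.2 + 3 * v.2.2.2), (v.1.1 + v.1.2 + v.2.1.1 + v.2.2.1)), ((2 * v.1.1 + 3 * v.1.2 - v.2.1.1 + 2 * v.2.1.2 - v.2.2.1 - v.2.2.2), (- v.1.1 + v.1.2 + v.2.1.1 + v.2.1.2 + v.2.2.2)), ((v.1.1 + v.2.1.1 - 2 * v.2.1.2 - 2 * v.2.2.1 + v.2.2.2), (v.1.2 - v.2.1.1 - v.2.1.2 + v.2.2.1 + 2 * v.2.2.2)))

def Tri (v : V6) : V6 :=
  ((3 * v.1.1, 3 * v.1.2), (3 * v.2.1.1, 3 * v.2.1.2), (3 * v.2.2.1, 3 * v.2.2.2))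

lemma qV_tri (d : ℕ) (v : V6) : qV d (Tri v) = 9 * qV d v := by
  simp only [qV, Qf, Qform, Tri]; ring

lemma qV_Mmap (v : V6) : qV 3 (Mmap v) = 9 * qV 3 v := by
  simp only [qV, Qf, Qform, Mmap]; push_cast; ring

lemma qV_Nmap (v : V6) : qV 3 (Nmap v) = 9 * qV 3 v := by
  simp only [qV, Qf, Qform, Nmap]; push_cast; ring


lemma bij3 (k : ℕ) :
    ({v : V6 | PC1c v ∧ qV 3 v = (k : ℤ)}).ncard
    = ({v : V6 | PC2c v ∧ qV 3 v = (k : ℤ)}).ncard := by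
  have hMinj : Function.Injective Mmap := by
    rintro ⟨⟨u1, u2⟩, ⟨u3, u4⟩, u5, u6⟩ ⟨⟨v1, v2⟩, ⟨v3, v4⟩, v5, v6⟩ h
    simp only [Mmap, Prod.mk.injEq] at h ⊢
    omega
  have hTinj : Function.Injective Tri := by
    rintro ⟨⟨u1, u2⟩, ⟨u3, u4⟩, u5, u6⟩ ⟨⟨v1, v2⟩, ⟨v3, v4⟩, v5, v6⟩ h
    simp only [Tri, Prod.mk.injEq] at h ⊢
    omega
  have himg : Mmap '' {v : V6 | PC1c v ∧ qV 3 v = (k : ℤ)}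
      = Tri '' {v : V6 | PC2c v ∧ qV 3 v = (k : ℤ)} := by
    ext u
    simp only [Set.mem_image, Set.mem_setOf_eq]
    constructor
    · rintro ⟨⟨⟨v1, v2⟩, ⟨v3, v4⟩, v5, v6⟩, ⟨hpc, hq⟩, rfl⟩
      simp only [PC1c] at hpc
      obtain ⟨p1, p2, p3⟩ := hpc
      refine ⟨((((v1 + 3 * v2 + v3 - 3 * v4 + v5) / 3), ((- v1 + v3 + 2 * v4 + v6) / 3)), (((3 * v2 - v3 + 2 * v4 + v5 - 2 * v6) / 3), ((v1 + v3 + v4 - v5 - v6) / 3)), (((3 * v2 - v3 - v4 - 2 * v5 + v6) / 3), ((v1 + v4 + v5 + 2 * v6) / 3))), ⟨?_, ?_⟩, ?_⟩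
      · simp only [PC2c]; omega
      · have ht : Tri ((((v1 + 3 * v2 + v3 - 3 * v4 + v5) / 3), ((- v1 + v3 + 2 * v4 + v6) / 3)), (((3 * v2 - v3 + 2 * v4 + v5 - 2 * v6) / 3), ((v1 + v3 + v4 - v5 - v6) / 3)), (((3 * v2 - v3 - v4 - 2 * v5 + v6) / 3), ((v1 + v4 + v5 + 2 * v6) / 3))) = Mmap ((v1, v2), (v3, v4), v5, v6) := by
          simp only [Tri, Mmap, Prod.mk.injEq]
          refine ⟨⟨?_, ?_⟩, ⟨?_, ?_⟩, ?_, ?_⟩ <;> omega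
        have h9 : qV 3 (Tri ((((v1 + 3 * v2 + v3 - 3 * v4 + v5) / 3), ((- v1 + v3 + 2 * v4 + v6) / 3)), (((3 * v2 - v3 + 2 * v4 + v5 - 2 * v6) / 3), ((v1 + v3 + v4 - v5 - v6) / 3)), (((3 * v2 - v3 - v4 - 2 * v5 + v6) / 3), ((v1 + v4 + v5 + 2 * v6) / 3)))) = 9 * qV 3 ((((v1 + 3 * v2 + v3 - 3 * v4 + v5) / 3), ((- v1 + v3 + 2 * v4 + v6) / 3)), (((3 * v2 - v3 + 2 * v4 + v5 - 2 * v6) / 3), ((v1 + v3 + v4 - v5 - v6) / 3)), (((3 * v2 - v3 - v4 - 2 * v5 + v6) / 3), ((v1 + v4 + v5 + 2 * v6) / 3))) := qV_tri 3 _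
        have h9' : qV 3 (Mmap ((v1, v2), (v3, v4), v5, v6)) = 9 * qV 3 ((v1, v2), (v3, v4), v5, v6) := qV_Mmap _
        rw [ht, h9'] at h9
        omega
      · have ht : Tri ((((v1 + 3 * v2 + v3 - 3 * v4 + v5) / 3), ((- v1 + v3 + 2 * v4 + v6) / 3)), (((3 * v2 - v3 + 2 * v4 + v5 - 2 * v6) / 3), ((v1 + v3 + v4 - v5 - v6) / 3)), (((3 * v2 - v3 - v4 - 2 * v5 + v6) / 3), ((v1 + v4 + v5 + 2 * v6) / 3))) = Mmap ((v1, v2), (v3, v4), v5, v6) := by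
          simp only [Tri, Mmap, Prod.mk.injEq]
          refine ⟨⟨?_, ?_⟩, ⟨?_, ?_⟩, ?_, ?_⟩ <;> omega
        exact ht
    · rintro ⟨⟨⟨w1, w2⟩, ⟨w3, w4⟩, w5, w6⟩, ⟨hpc, hq⟩, rfl⟩
      simp only [PC2c] at hpc
      obtain ⟨p1, p2, p3⟩ := hpc
      refine ⟨((((- 3 * w2 + 3 * w4 + 3 * w6) / 3), ((w1 + w2 + w3 + w5) / 3)), (((2 * w1 + 3 * w2 - w3 + 2 * w4 - w5 - w6) / 3), ((- w1 + w2 + w3 + w4 + w6) / 3)), (((w1 + w3 - 2 * w4 - 2 * w5 + w6) / 3), ((w2 - w3 - w4 + w5 + 2 * w6) / 3))), ⟨?_, ?_⟩, ?_⟩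
      · simp only [PC1c]; omega
      · have ht : Tri ((((- 3 * w2 + 3 * w4 + 3 * w6) / 3), ((w1 + w2 + w3 + w5) / 3)), (((2 * w1 + 3 * w2 - w3 + 2 * w4 - w5 - w6) / 3), ((- w1 + w2 + w3 + w4 + w6) / 3)), (((w1 + w3 - 2 * w4 - 2 * w5 + w6) / 3), ((w2 - w3 - w4 + w5 + 2 * w6) / 3))) = Nmap ((w1, w2), (w3, w4), w5, w6) := by
          simp only [Tri, Nmap, Prod.mk.injEq]
          refine ⟨⟨?_, ?_⟩, ⟨?_, ?_⟩, ?_, ?_⟩ <;> omega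
        have h9 : qV 3 (Tri ((((- 3 * w2 + 3 * w4 + 3 * w6) / 3), ((w1 + w2 + w3 + w5) / 3)), (((2 * w1 + 3 * w2 - w3 + 2 * w4 - w5 - w6) / 3), ((- w1 + w2 + w3 + w4 + w6) / 3)), (((w1 + w3 - 2 * w4 - 2 * w5 + w6) / 3), ((w2 - w3 - w4 + w5 + 2 * w6) / 3)))) = 9 * qV 3 ((((- 3 * w2 + 3 * w4 + 3 * w6) / 3), ((w1 + w2 + w3 + w5) / 3)), (((2 * w1 + 3 * w2 - w3 + 2 * w4 - w5 - w6) / 3), ((- w1 + w2 + w3 + w4 + w6) / 3)), (((w1 + w3 - 2 * w4 - 2 * w5 + w6) / 3), ((w2 - w3 - w4 + w5 + 2 * w6) / 3))) := qV_tri 3 _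
        have h9' : qV 3 (Nmap ((w1, w2), (w3, w4), w5, w6)) = 9 * qV 3 ((w1, w2), (w3, w4), w5, w6) := qV_Nmap _
        rw [ht, h9'] at h9
        omega
      · have hMN : Mmap ((((- 3 * w2 + 3 * w4 + 3 * w6) / 3), ((w1 + w2 + w3 + w5) / 3)), (((2 * w1 + 3 * w2 - w3 + 2 * w4 - w5 - w6) / 3), ((- w1 + w2 + w3 + w4 + w6) / 3)), (((w1 + w3 - 2 * w4 - 2 * w5 + w6) / 3), ((w2 - w3 - w4 + w5 + 2 * w6) / 3))) = Tri ((w1, w2), (w3, w4), w5, w6) := by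
          simp only [Mmap, Tri, Prod.mk.injEq]
          refine ⟨⟨?_, ?_⟩, ⟨?_, ?_⟩, ?_, ?_⟩ <;> omega
        exact hMN
  calc ({v : V6 | PC1c v ∧ qV 3 v = (k : ℤ)}).ncard
      = (Mmap '' {v : V6 | PC1c v ∧ qV 3 v = (k : ℤ)}).ncard :=
        (Set.ncard_image_of_injective _ hMinj).symm
    _ = (Tri '' {v : V6 | PC2c v ∧ qV 3 v = (k : ℤ)}).ncard := by rw [himg]
    _ = ({v : V6 | PC2c v ∧ qV 3 v = (k : ℤ)}).ncard :=
        Set.ncard_image_of_injective _ hTinj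

lemma code1_series (d : ℕ) (hd : 1 ≤ d) :
    MvPolynomial.aeval (T3 d) P1
    = PowerSeries.mk fun k => (({v : V6 | PC1c v ∧ qV d v = (k : ℤ)}).ncard : ℤ) := by
  have e1 : MvPolynomial.aeval (T3 d) P1
      = cosetTheta 3 d 0 0 * cosetTheta 3 d 0 0 * cosetTheta 3 d 0 0 +
      cosetTheta 3 d 0 0 * cosetTheta 3 d 0 1 * cosetTheta 3 d 0 1 +
      cosetTheta 3 d 0 0 * cosetTheta 3 d 0 2 * cosetTheta 3 d 0 2 +
      cosetTheta 3 d 0 0 * cosetTheta 3 d 2 2 * cosetTheta 3 d 1 0 +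
      cosetTheta 3 d 0 0 * cosetTheta 3 d 2 0 * cosetTheta 3 d 1 1 +
      cosetTheta 3 d 0 0 * cosetTheta 3 d 2 1 * cosetTheta 3 d 1 2 +
      cosetTheta 3 d 0 0 * cosetTheta 3 d 1 1 * cosetTheta 3 d 2 0 +
      cosetTheta 3 d 0 0 * cosetTheta 3 d 1 2 * cosetTheta 3 d 2 1 +
      cosetTheta 3 d 0 0 * cosetTheta 3 d 1 0 * cosetTheta 3 d 2 2 +
      cosetTheta 3 d 0 1 * cosetTheta 3 d 0 0 * cosetTheta 3 d 0 0 +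
      cosetTheta 3 d 0 1 * cosetTheta 3 d 0 1 * cosetTheta 3 d 0 1 +
      cosetTheta 3 d 0 1 * cosetTheta 3 d 0 2 * cosetTheta 3 d 0 2 +
      cosetTheta 3 d 0 1 * cosetTheta 3 d 2 2 * cosetTheta 3 d 1 0 +
      cosetTheta 3 d 0 1 * cosetTheta 3 d 2 0 * cosetTheta 3 d 1 1 +
      cosetTheta 3 d 0 1 * cosetTheta 3 d 2 1 * cosetTheta 3 d 1 2 +
      cosetTheta 3 d 0 1 * cosetTheta 3 d 1 1 * cosetTheta 3 d 2 0 +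
      cosetTheta 3 d 0 1 * cosetTheta 3 d 1 2 * cosetTheta 3 d 2 1 +
      cosetTheta 3 d 0 1 * cosetTheta 3 d 1 0 * cosetTheta 3 d 2 2 +
      cosetTheta 3 d 0 2 * cosetTheta 3 d 0 0 * cosetTheta 3 d 0 0 +
      cosetTheta 3 d 0 2 * cosetTheta 3 d 0 1 * cosetTheta 3 d 0 1 +
      cosetTheta 3 d 0 2 * cosetTheta 3 d 0 2 * cosetTheta 3 d 0 2 +
      cosetTheta 3 d 0 2 * cosetTheta 3 d 2 2 * cosetTheta 3 d 1 0 +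
      cosetTheta 3 d 0 2 * cosetTheta 3 d 2 0 * cosetTheta 3 d 1 1 +
      cosetTheta 3 d 0 2 * cosetTheta 3 d 2 1 * cosetTheta 3 d 1 2 +
      cosetTheta 3 d 0 2 * cosetTheta 3 d 1 1 * cosetTheta 3 d 2 0 +
      cosetTheta 3 d 0 2 * cosetTheta 3 d 1 2 * cosetTheta 3 d 2 1 +
      cosetTheta 3 d 0 2 * cosetTheta 3 d 1 0 * cosetTheta 3 d 2 2 := by
    simp only [P1, map_add, map_mul, map_pow, map_ofNat, MvPolynomial.aeval_X,
      T3_0, T3_1, T3_2, T3_3]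
    simp only [ct20 d, ct02 d, ct12 d, ct21 d, ct22 d]
    ring
  rw [e1]
  rw [word_series d hd 0 0 0 0 0 0 (by norm_num) (by norm_num) (by norm_num)]
  rw [word_series d hd 0 0 0 1 0 1 (by norm_num) (by norm_num) (by norm_num)]
  rw [word_series d hd 0 0 0 2 0 2 (by norm_num) (by norm_num) (by norm_num)]
  rw [word_series d hd 0 0 2 2 1 0 (by norm_num) (by norm_num) (by norm_num)]
  rw [word_series d hd 0 0 2 0 1 1 (by norm_num) (by norm_num) (by norm_num)]
  rw [word_series d hd 0 0 2 1 1 2 (by norm_num) (by norm_num) (by norm_num)]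
  rw [word_series d hd 0 0 1 1 2 0 (by norm_num) (by norm_num) (by norm_num)]
  rw [word_series d hd 0 0 1 2 2 1 (by norm_num) (by norm_num) (by norm_num)]
  rw [word_series d hd 0 0 1 0 2 2 (by norm_num) (by norm_num) (by norm_num)]
  rw [word_series d hd 0 1 0 0 0 0 (by norm_num) (by norm_num) (by norm_num)]
  rw [word_series d hd 0 1 0 1 0 1 (by norm_num) (by norm_num) (by norm_num)]
  rw [word_series d hd 0 1 0 2 0 2 (by norm_num) (by norm_num) (by norm_num)]
  rw [word_series d hd 0 1 2 2 1 0 (by norm_num) (by norm_num) (by norm_num)]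
  rw [word_series d hd 0 1 2 0 1 1 (by norm_num) (by norm_num) (by norm_num)]
  rw [word_series d hd 0 1 2 1 1 2 (by norm_num) (by norm_num) (by norm_num)]
  rw [word_series d hd 0 1 1 1 2 0 (by norm_num) (by norm_num) (by norm_num)]
  rw [word_series d hd 0 1 1 2 2 1 (by norm_num) (by norm_num) (by norm_num)]
  rw [word_series d hd 0 1 1 0 2 2 (by norm_num) (by norm_num) (by norm_num)]
  rw [word_series d hd 0 2 0 0 0 0 (by norm_num) (by norm_num) (by norm_num)]
  rw [word_series d hd 0 2 0 1 0 1 (by norm_num) (by norm_num) (by norm_num)]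
  rw [word_series d hd 0 2 0 2 0 2 (by norm_num) (by norm_num) (by norm_num)]
  rw [word_series d hd 0 2 2 2 1 0 (by norm_num) (by norm_num) (by norm_num)]
  rw [word_series d hd 0 2 2 0 1 1 (by norm_num) (by norm_num) (by norm_num)]
  rw [word_series d hd 0 2 2 1 1 2 (by norm_num) (by norm_num) (by norm_num)]
  rw [word_series d hd 0 2 1 1 2 0 (by norm_num) (by norm_num) (by norm_num)]
  rw [word_series d hd 0 2 1 2 2 1 (by norm_num) (by norm_num) (by norm_num)]
  rw [word_series d hd 0 2 1 0 2 2 (by norm_num) (by norm_num) (by norm_num)]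
  ext k
  simp only [map_add, PowerSeries.coeff_mk]
  rw [split3 hd PC1c (fun v : V6 => v.1.2) k]
  rw [split3 hd (fun v : V6 => PC1c v ∧ v.1.2 % 3 = 0) (fun v : V6 => v.2.2.1) k]
  rw [split3 hd (fun v : V6 => PC1c v ∧ v.1.2 % 3 = 1) (fun v : V6 => v.2.2.1) k]
  rw [split3 hd (fun v : V6 => PC1c v ∧ v.1.2 % 3 = 2) (fun v : V6 => v.2.2.1) k]
  rw [split3 hd (fun v : V6 => (PC1c v ∧ v.1.2 % 3 = 0) ∧ v.2.2.1 % 3 = 0) (fun v : V6 => v.2.2.2) k]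
  rw [split3 hd (fun v : V6 => (PC1c v ∧ v.1.2 % 3 = 0) ∧ v.2.2.1 % 3 = 1) (fun v : V6 => v.2.2.2) k]
  rw [split3 hd (fun v : V6 => (PC1c v ∧ v.1.2 % 3 = 0) ∧ v.2.2.1 % 3 = 2) (fun v : V6 => v.2.2.2) k]
  rw [split3 hd (fun v : V6 => (PC1c v ∧ v.1.2 % 3 = 1) ∧ v.2.2.1 % 3 = 0) (fun v : V6 => v.2.2.2) k]
  rw [split3 hd (fun v : V6 => (PC1c v ∧ v.1.2 % 3 = 1) ∧ v.2.2.1 % 3 = 1) (fun v : V6 => v.2.2.2) k]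
  rw [split3 hd (fun v : V6 => (PC1c v ∧ v.1.2 % 3 = 1) ∧ v.2.2.1 % 3 = 2) (fun v : V6 => v.2.2.2) k]
  rw [split3 hd (fun v : V6 => (PC1c v ∧ v.1.2 % 3 = 2) ∧ v.2.2.1 % 3 = 0) (fun v : V6 => v.2.2.2) k]
  rw [split3 hd (fun v : V6 => (PC1c v ∧ v.1.2 % 3 = 2) ∧ v.2.2.1 % 3 = 1) (fun v : V6 => v.2.2.2) k]
  rw [split3 hd (fun v : V6 => (PC1c v ∧ v.1.2 % 3 = 2) ∧ v.2.2.1 % 3 = 2) (fun v : V6 => v.2.2.2) k]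
  rw [show {v : V6 | (((PC1c v ∧ v.1.2 % 3 = 0) ∧ v.2.2.1 % 3 = 0) ∧ v.2.2.2 % 3 = 0) ∧ qV d v = (k : ℤ)}
      = {v : V6 | (v.1.1 % 3 = 0 ∧ v.1.2 % 3 = 0 ∧ v.2.1.1 % 3 = 0 ∧ v.2.1.2 % 3 = 0 ∧ v.2.2.1 % 3 = 0 ∧ v.2.2.2 % 3 = 0) ∧ qV d v = (k : ℤ)} from by
    ext v; simp only [Set.mem_setOf_eq, PC1c]; constructor <;> rintro ⟨h1, h2⟩ <;>
      exact ⟨by omega, h2⟩]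
  rw [show {v : V6 | (((PC1c v ∧ v.1.2 % 3 = 0) ∧ v.2.2.1 % 3 = 0) ∧ v.2.2.2 % 3 = 1) ∧ qV d v = (k : ℤ)}
      = {v : V6 | (v.1.1 % 3 = 0 ∧ v.1.2 % 3 = 0 ∧ v.2.1.1 % 3 = 0 ∧ v.2.1.2 % 3 = 1 ∧ v.2.2.1 % 3 = 0 ∧ v.2.2.2 % 3 = 1) ∧ qV d v = (k : ℤ)} from by
    ext v; simp only [Set.mem_setOf_eq, PC1c]; constructor <;> rintro ⟨h1, h2⟩ <;>
      exact ⟨by omega, h2⟩]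
  rw [show {v : V6 | (((PC1c v ∧ v.1.2 % 3 = 0) ∧ v.2.2.1 % 3 = 0) ∧ v.2.2.2 % 3 = 2) ∧ qV d v = (k : ℤ)}
      = {v : V6 | (v.1.1 % 3 = 0 ∧ v.1.2 % 3 = 0 ∧ v.2.1.1 % 3 = 0 ∧ v.2.1.2 % 3 = 2 ∧ v.2.2.1 % 3 = 0 ∧ v.2.2.2 % 3 = 2) ∧ qV d v = (k : ℤ)} from by
    ext v; simp only [Set.mem_setOf_eq, PC1c]; constructor <;> rintro ⟨h1, h2⟩ <;>
      exact ⟨by omega, h2⟩]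
  rw [show {v : V6 | (((PC1c v ∧ v.1.2 % 3 = 0) ∧ v.2.2.1 % 3 = 1) ∧ v.2.2.2 % 3 = 0) ∧ qV d v = (k : ℤ)}
      = {v : V6 | (v.1.1 % 3 = 0 ∧ v.1.2 % 3 = 0 ∧ v.2.1.1 % 3 = 2 ∧ v.2.1.2 % 3 = 2 ∧ v.2.2.1 % 3 = 1 ∧ v.2.2.2 % 3 = 0) ∧ qV d v = (k : ℤ)} from by
    ext v; simp only [Set.mem_setOf_eq, PC1c]; constructor <;> rintro ⟨h1, h2⟩ <;>
      exact ⟨by omega, h2⟩]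
  rw [show {v : V6 | (((PC1c v ∧ v.1.2 % 3 = 0) ∧ v.2.2.1 % 3 = 1) ∧ v.2.2.2 % 3 = 1) ∧ qV d v = (k : ℤ)}
      = {v : V6 | (v.1.1 % 3 = 0 ∧ v.1.2 % 3 = 0 ∧ v.2.1.1 % 3 = 2 ∧ v.2.1.2 % 3 = 0 ∧ v.2.2.1 % 3 = 1 ∧ v.2.2.2 % 3 = 1) ∧ qV d v = (k : ℤ)} from by
    ext v; simp only [Set.mem_setOf_eq, PC1c]; constructor <;> rintro ⟨h1, h2⟩ <;>
      exact ⟨by omega, h2⟩]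
  rw [show {v : V6 | (((PC1c v ∧ v.1.2 % 3 = 0) ∧ v.2.2.1 % 3 = 1) ∧ v.2.2.2 % 3 = 2) ∧ qV d v = (k : ℤ)}
      = {v : V6 | (v.1.1 % 3 = 0 ∧ v.1.2 % 3 = 0 ∧ v.2.1.1 % 3 = 2 ∧ v.2.1.2 % 3 = 1 ∧ v.2.2.1 % 3 = 1 ∧ v.2.2.2 % 3 = 2) ∧ qV d v = (k : ℤ)} from by
    ext v; simp only [Set.mem_setOf_eq, PC1c]; constructor <;> rintro ⟨h1, h2⟩ <;>
      exact ⟨by omega, h2⟩]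
  rw [show {v : V6 | (((PC1c v ∧ v.1.2 % 3 = 0) ∧ v.2.2.1 % 3 = 2) ∧ v.2.2.2 % 3 = 0) ∧ qV d v = (k : ℤ)}
      = {v : V6 | (v.1.1 % 3 = 0 ∧ v.1.2 % 3 = 0 ∧ v.2.1.1 % 3 = 1 ∧ v.2.1.2 % 3 = 1 ∧ v.2.2.1 % 3 = 2 ∧ v.2.2.2 % 3 = 0) ∧ qV d v = (k : ℤ)} from by
    ext v; simp only [Set.mem_setOf_eq, PC1c]; constructor <;> rintro ⟨h1, h2⟩ <;>
      exact ⟨by omega, h2⟩]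
  rw [show {v : V6 | (((PC1c v ∧ v.1.2 % 3 = 0) ∧ v.2.2.1 % 3 = 2) ∧ v.2.2.2 % 3 = 1) ∧ qV d v = (k : ℤ)}
      = {v : V6 | (v.1.1 % 3 = 0 ∧ v.1.2 % 3 = 0 ∧ v.2.1.1 % 3 = 1 ∧ v.2.1.2 % 3 = 2 ∧ v.2.2.1 % 3 = 2 ∧ v.2.2.2 % 3 = 1) ∧ qV d v = (k : ℤ)} from by
    ext v; simp only [Set.mem_setOf_eq, PC1c]; constructor <;> rintro ⟨h1, h2⟩ <;>
      exact ⟨by omega, h2⟩]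
  rw [show {v : V6 | (((PC1c v ∧ v.1.2 % 3 = 0) ∧ v.2.2.1 % 3 = 2) ∧ v.2.2.2 % 3 = 2) ∧ qV d v = (k : ℤ)}
      = {v : V6 | (v.1.1 % 3 = 0 ∧ v.1.2 % 3 = 0 ∧ v.2.1.1 % 3 = 1 ∧ v.2.1.2 % 3 = 0 ∧ v.2.2.1 % 3 = 2 ∧ v.2.2.2 % 3 = 2) ∧ qV d v = (k : ℤ)} from by
    ext v; simp only [Set.mem_setOf_eq, PC1c]; constructor <;> rintro ⟨h1, h2⟩ <;>
      exact ⟨by omega, h2⟩]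
  rw [show {v : V6 | (((PC1c v ∧ v.1.2 % 3 = 1) ∧ v.2.2.1 % 3 = 0) ∧ v.2.2.2 % 3 = 0) ∧ qV d v = (k : ℤ)}
      = {v : V6 | (v.1.1 % 3 = 0 ∧ v.1.2 % 3 = 1 ∧ v.2.1.1 % 3 = 0 ∧ v.2.1.2 % 3 = 0 ∧ v.2.2.1 % 3 = 0 ∧ v.2.2.2 % 3 = 0) ∧ qV d v = (k : ℤ)} from by
    ext v; simp only [Set.mem_setOf_eq, PC1c]; constructor <;> rintro ⟨h1, h2⟩ <;>
      exact ⟨by omega, h2⟩]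
  rw [show {v : V6 | (((PC1c v ∧ v.1.2 % 3 = 1) ∧ v.2.2.1 % 3 = 0) ∧ v.2.2.2 % 3 = 1) ∧ qV d v = (k : ℤ)}
      = {v : V6 | (v.1.1 % 3 = 0 ∧ v.1.2 % 3 = 1 ∧ v.2.1.1 % 3 = 0 ∧ v.2.1.2 % 3 = 1 ∧ v.2.2.1 % 3 = 0 ∧ v.2.2.2 % 3 = 1) ∧ qV d v = (k : ℤ)} from by
    ext v; simp only [Set.mem_setOf_eq, PC1c]; constructor <;> rintro ⟨h1, h2⟩ <;>
      exact ⟨by omega, h2⟩]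
  rw [show {v : V6 | (((PC1c v ∧ v.1.2 % 3 = 1) ∧ v.2.2.1 % 3 = 0) ∧ v.2.2.2 % 3 = 2) ∧ qV d v = (k : ℤ)}
      = {v : V6 | (v.1.1 % 3 = 0 ∧ v.1.2 % 3 = 1 ∧ v.2.1.1 % 3 = 0 ∧ v.2.1.2 % 3 = 2 ∧ v.2.2.1 % 3 = 0 ∧ v.2.2.2 % 3 = 2) ∧ qV d v = (k : ℤ)} from by
    ext v; simp only [Set.mem_setOf_eq, PC1c]; constructor <;> rintro ⟨h1, h2⟩ <;>
      exact ⟨by omega, h2⟩]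
  rw [show {v : V6 | (((PC1c v ∧ v.1.2 % 3 = 1) ∧ v.2.2.1 % 3 = 1) ∧ v.2.2.2 % 3 = 0) ∧ qV d v = (k : ℤ)}
      = {v : V6 | (v.1.1 % 3 = 0 ∧ v.1.2 % 3 = 1 ∧ v.2.1.1 % 3 = 2 ∧ v.2.1.2 % 3 = 2 ∧ v.2.2.1 % 3 = 1 ∧ v.2.2.2 % 3 = 0) ∧ qV d v = (k : ℤ)} from by
    ext v; simp only [Set.mem_setOf_eq, PC1c]; constructor <;> rintro ⟨h1, h2⟩ <;>
      exact ⟨by omega, h2⟩]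
  rw [show {v : V6 | (((PC1c v ∧ v.1.2 % 3 = 1) ∧ v.2.2.1 % 3 = 1) ∧ v.2.2.2 % 3 = 1) ∧ qV d v = (k : ℤ)}
      = {v : V6 | (v.1.1 % 3 = 0 ∧ v.1.2 % 3 = 1 ∧ v.2.1.1 % 3 = 2 ∧ v.2.1.2 % 3 = 0 ∧ v.2.2.1 % 3 = 1 ∧ v.2.2.2 % 3 = 1) ∧ qV d v = (k : ℤ)} from by
    ext v; simp only [Set.mem_setOf_eq, PC1c]; constructor <;> rintro ⟨h1, h2⟩ <;>
      exact ⟨by omega, h2⟩]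
  rw [show {v : V6 | (((PC1c v ∧ v.1.2 % 3 = 1) ∧ v.2.2.1 % 3 = 1) ∧ v.2.2.2 % 3 = 2) ∧ qV d v = (k : ℤ)}
      = {v : V6 | (v.1.1 % 3 = 0 ∧ v.1.2 % 3 = 1 ∧ v.2.1.1 % 3 = 2 ∧ v.2.1.2 % 3 = 1 ∧ v.2.2.1 % 3 = 1 ∧ v.2.2.2 % 3 = 2) ∧ qV d v = (k : ℤ)} from by
    ext v; simp only [Set.mem_setOf_eq, PC1c]; constructor <;> rintro ⟨h1, h2⟩ <;>
      exact ⟨by omega, h2⟩]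
  rw [show {v : V6 | (((PC1c v ∧ v.1.2 % 3 = 1) ∧ v.2.2.1 % 3 = 2) ∧ v.2.2.2 % 3 = 0) ∧ qV d v = (k : ℤ)}
      = {v : V6 | (v.1.1 % 3 = 0 ∧ v.1.2 % 3 = 1 ∧ v.2.1.1 % 3 = 1 ∧ v.2.1.2 % 3 = 1 ∧ v.2.2.1 % 3 = 2 ∧ v.2.2.2 % 3 = 0) ∧ qV d v = (k : ℤ)} from by
    ext v; simp only [Set.mem_setOf_eq, PC1c]; constructor <;> rintro ⟨h1, h2⟩ <;>
      exact ⟨by omega, h2⟩]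
  rw [show {v : V6 | (((PC1c v ∧ v.1.2 % 3 = 1) ∧ v.2.2.1 % 3 = 2) ∧ v.2.2.2 % 3 = 1) ∧ qV d v = (k : ℤ)}
      = {v : V6 | (v.1.1 % 3 = 0 ∧ v.1.2 % 3 = 1 ∧ v.2.1.1 % 3 = 1 ∧ v.2.1.2 % 3 = 2 ∧ v.2.2.1 % 3 = 2 ∧ v.2.2.2 % 3 = 1) ∧ qV d v = (k : ℤ)} from by
    ext v; simp only [Set.mem_setOf_eq, PC1c]; constructor <;> rintro ⟨h1, h2⟩ <;>
      exact ⟨by omega, h2⟩]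
  rw [show {v : V6 | (((PC1c v ∧ v.1.2 % 3 = 1) ∧ v.2.2.1 % 3 = 2) ∧ v.2.2.2 % 3 = 2) ∧ qV d v = (k : ℤ)}
      = {v : V6 | (v.1.1 % 3 = 0 ∧ v.1.2 % 3 = 1 ∧ v.2.1.1 % 3 = 1 ∧ v.2.1.2 % 3 = 0 ∧ v.2.2.1 % 3 = 2 ∧ v.2.2.2 % 3 = 2) ∧ qV d v = (k : ℤ)} from by
    ext v; simp only [Set.mem_setOf_eq, PC1c]; constructor <;> rintro ⟨h1, h2⟩ <;>
      exact ⟨by omega, h2⟩]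
  rw [show {v : V6 | (((PC1c v ∧ v.1.2 % 3 = 2) ∧ v.2.2.1 % 3 = 0) ∧ v.2.2.2 % 3 = 0) ∧ qV d v = (k : ℤ)}
      = {v : V6 | (v.1.1 % 3 = 0 ∧ v.1.2 % 3 = 2 ∧ v.2.1.1 % 3 = 0 ∧ v.2.1.2 % 3 = 0 ∧ v.2.2.1 % 3 = 0 ∧ v.2.2.2 % 3 = 0) ∧ qV d v = (k : ℤ)} from by
    ext v; simp only [Set.mem_setOf_eq, PC1c]; constructor <;> rintro ⟨h1, h2⟩ <;>
      exact ⟨by omega, h2⟩]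
  rw [show {v : V6 | (((PC1c v ∧ v.1.2 % 3 = 2) ∧ v.2.2.1 % 3 = 0) ∧ v.2.2.2 % 3 = 1) ∧ qV d v = (k : ℤ)}
      = {v : V6 | (v.1.1 % 3 = 0 ∧ v.1.2 % 3 = 2 ∧ v.2.1.1 % 3 = 0 ∧ v.2.1.2 % 3 = 1 ∧ v.2.2.1 % 3 = 0 ∧ v.2.2.2 % 3 = 1) ∧ qV d v = (k : ℤ)} from by
    ext v; simp only [Set.mem_setOf_eq, PC1c]; constructor <;> rintro ⟨h1, h2⟩ <;>
      exact ⟨by omega, h2⟩]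
  rw [show {v : V6 | (((PC1c v ∧ v.1.2 % 3 = 2) ∧ v.2.2.1 % 3 = 0) ∧ v.2.2.2 % 3 = 2) ∧ qV d v = (k : ℤ)}
      = {v : V6 | (v.1.1 % 3 = 0 ∧ v.1.2 % 3 = 2 ∧ v.2.1.1 % 3 = 0 ∧ v.2.1.2 % 3 = 2 ∧ v.2.2.1 % 3 = 0 ∧ v.2.2.2 % 3 = 2) ∧ qV d v = (k : ℤ)} from by
    ext v; simp only [Set.mem_setOf_eq, PC1c]; constructor <;> rintro ⟨h1, h2⟩ <;>
      exact ⟨by omega, h2⟩]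
  rw [show {v : V6 | (((PC1c v ∧ v.1.2 % 3 = 2) ∧ v.2.2.1 % 3 = 1) ∧ v.2.2.2 % 3 = 0) ∧ qV d v = (k : ℤ)}
      = {v : V6 | (v.1.1 % 3 = 0 ∧ v.1.2 % 3 = 2 ∧ v.2.1.1 % 3 = 2 ∧ v.2.1.2 % 3 = 2 ∧ v.2.2.1 % 3 = 1 ∧ v.2.2.2 % 3 = 0) ∧ qV d v = (k : ℤ)} from by
    ext v; simp only [Set.mem_setOf_eq, PC1c]; constructor <;> rintro ⟨h1, h2⟩ <;>
      exact ⟨by omega, h2⟩]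
  rw [show {v : V6 | (((PC1c v ∧ v.1.2 % 3 = 2) ∧ v.2.2.1 % 3 = 1) ∧ v.2.2.2 % 3 = 1) ∧ qV d v = (k : ℤ)}
      = {v : V6 | (v.1.1 % 3 = 0 ∧ v.1.2 % 3 = 2 ∧ v.2.1.1 % 3 = 2 ∧ v.2.1.2 % 3 = 0 ∧ v.2.2.1 % 3 = 1 ∧ v.2.2.2 % 3 = 1) ∧ qV d v = (k : ℤ)} from by
    ext v; simp only [Set.mem_setOf_eq, PC1c]; constructor <;> rintro ⟨h1, h2⟩ <;>
      exact ⟨by omega, h2⟩]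
  rw [show {v : V6 | (((PC1c v ∧ v.1.2 % 3 = 2) ∧ v.2.2.1 % 3 = 1) ∧ v.2.2.2 % 3 = 2) ∧ qV d v = (k : ℤ)}
      = {v : V6 | (v.1.1 % 3 = 0 ∧ v.1.2 % 3 = 2 ∧ v.2.1.1 % 3 = 2 ∧ v.2.1.2 % 3 = 1 ∧ v.2.2.1 % 3 = 1 ∧ v.2.2.2 % 3 = 2) ∧ qV d v = (k : ℤ)} from by
    ext v; simp only [Set.mem_setOf_eq, PC1c]; constructor <;> rintro ⟨h1, h2⟩ <;>
      exact ⟨by omega, h2⟩]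
  rw [show {v : V6 | (((PC1c v ∧ v.1.2 % 3 = 2) ∧ v.2.2.1 % 3 = 2) ∧ v.2.2.2 % 3 = 0) ∧ qV d v = (k : ℤ)}
      = {v : V6 | (v.1.1 % 3 = 0 ∧ v.1.2 % 3 = 2 ∧ v.2.1.1 % 3 = 1 ∧ v.2.1.2 % 3 = 1 ∧ v.2.2.1 % 3 = 2 ∧ v.2.2.2 % 3 = 0) ∧ qV d v = (k : ℤ)} from by
    ext v; simp only [Set.mem_setOf_eq, PC1c]; constructor <;> rintro ⟨h1, h2⟩ <;>
      exact ⟨by omega, h2⟩]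
  rw [show {v : V6 | (((PC1c v ∧ v.1.2 % 3 = 2) ∧ v.2.2.1 % 3 = 2) ∧ v.2.2.2 % 3 = 1) ∧ qV d v = (k : ℤ)}
      = {v : V6 | (v.1.1 % 3 = 0 ∧ v.1.2 % 3 = 2 ∧ v.2.1.1 % 3 = 1 ∧ v.2.1.2 % 3 = 2 ∧ v.2.2.1 % 3 = 2 ∧ v.2.2.2 % 3 = 1) ∧ qV d v = (k : ℤ)} from by
    ext v; simp only [Set.mem_setOf_eq, PC1c]; constructor <;> rintro ⟨h1, h2⟩ <;>
      exact ⟨by omega, h2⟩]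
  rw [show {v : V6 | (((PC1c v ∧ v.1.2 % 3 = 2) ∧ v.2.2.1 % 3 = 2) ∧ v.2.2.2 % 3 = 2) ∧ qV d v = (k : ℤ)}
      = {v : V6 | (v.1.1 % 3 = 0 ∧ v.1.2 % 3 = 2 ∧ v.2.1.1 % 3 = 1 ∧ v.2.1.2 % 3 = 0 ∧ v.2.2.1 % 3 = 2 ∧ v.2.2.2 % 3 = 2) ∧ qV d v = (k : ℤ)} from by
    ext v; simp only [Set.mem_setOf_eq, PC1c]; constructor <;> rintro ⟨h1, h2⟩ <;>
      exact ⟨by omega, h2⟩]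
  push_cast
  ring

lemma code2_series (d : ℕ) (hd : 1 ≤ d) :
    MvPolynomial.aeval (T3 d) P2
    = PowerSeries.mk fun k => (({v : V6 | PC2c v ∧ qV d v = (k : ℤ)}).ncard : ℤ) := by
  have e1 : MvPolynomial.aeval (T3 d) P2
      = cosetTheta 3 d 0 0 * cosetTheta 3 d 0 0 * cosetTheta 3 d 0 0 +
      cosetTheta 3 d 2 1 * cosetTheta 3 d 0 0 * cosetTheta 3 d 0 1 +
      cosetTheta 3 d 1 2 * cosetTheta 3 d 0 0 * cosetTheta 3 d 0 2 +
      cosetTheta 3 d 1 0 * cosetTheta 3 d 1 0 * cosetTheta 3 d 1 0 +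
      cosetTheta 3 d 0 1 * cosetTheta 3 d 1 0 * cosetTheta 3 d 1 1 +
      cosetTheta 3 d 2 2 * cosetTheta 3 d 1 0 * cosetTheta 3 d 1 2 +
      cosetTheta 3 d 2 0 * cosetTheta 3 d 2 0 * cosetTheta 3 d 2 0 +
      cosetTheta 3 d 1 1 * cosetTheta 3 d 2 0 * cosetTheta 3 d 2 1 +
      cosetTheta 3 d 0 2 * cosetTheta 3 d 2 0 * cosetTheta 3 d 2 2 +
      cosetTheta 3 d 2 1 * cosetTheta 3 d 0 1 * cosetTheta 3 d 0 0 +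
      cosetTheta 3 d 1 2 * cosetTheta 3 d 0 1 * cosetTheta 3 d 0 1 +
      cosetTheta 3 d 0 0 * cosetTheta 3 d 0 1 * cosetTheta 3 d 0 2 +
      cosetTheta 3 d 0 1 * cosetTheta 3 d 1 1 * cosetTheta 3 d 1 0 +
      cosetTheta 3 d 2 2 * cosetTheta 3 d 1 1 * cosetTheta 3 d 1 1 +
      cosetTheta 3 d 1 0 * cosetTheta 3 d 1 1 * cosetTheta 3 d 1 2 +
      cosetTheta 3 d 1 1 * cosetTheta 3 d 2 1 * cosetTheta 3 d 2 0 +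
      cosetTheta 3 d 0 2 * cosetTheta 3 d 2 1 * cosetTheta 3 d 2 1 +
      cosetTheta 3 d 2 0 * cosetTheta 3 d 2 1 * cosetTheta 3 d 2 2 +
      cosetTheta 3 d 1 2 * cosetTheta 3 d 0 2 * cosetTheta 3 d 0 0 +
      cosetTheta 3 d 0 0 * cosetTheta 3 d 0 2 * cosetTheta 3 d 0 1 +
      cosetTheta 3 d 2 1 * cosetTheta 3 d 0 2 * cosetTheta 3 d 0 2 +
      cosetTheta 3 d 2 2 * cosetTheta 3 d 1 2 * cosetTheta 3 d 1 0 +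
      cosetTheta 3 d 1 0 * cosetTheta 3 d 1 2 * cosetTheta 3 d 1 1 +
      cosetTheta 3 d 0 1 * cosetTheta 3 d 1 2 * cosetTheta 3 d 1 2 +
      cosetTheta 3 d 0 2 * cosetTheta 3 d 2 2 * cosetTheta 3 d 2 0 +
      cosetTheta 3 d 2 0 * cosetTheta 3 d 2 2 * cosetTheta 3 d 2 1 +
      cosetTheta 3 d 1 1 * cosetTheta 3 d 2 2 * cosetTheta 3 d 2 2 := by
    simp only [P2, map_add, map_mul, map_pow, map_ofNat, MvPolynomial.aeval_X,
      T3_0, T3_1, T3_2, T3_3]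
    simp only [ct20 d, ct02 d, ct12 d, ct21 d, ct22 d]
    ring
  rw [e1]
  rw [word_series d hd 0 0 0 0 0 0 (by norm_num) (by norm_num) (by norm_num)]
  rw [word_series d hd 2 1 0 0 0 1 (by norm_num) (by norm_num) (by norm_num)]
  rw [word_series d hd 1 2 0 0 0 2 (by norm_num) (by norm_num) (by norm_num)]
  rw [word_series d hd 1 0 1 0 1 0 (by norm_num) (by norm_num) (by norm_num)]
  rw [word_series d hd 0 1 1 0 1 1 (by norm_num) (by norm_num) (by norm_num)]
  rw [word_series d hd 2 2 1 0 1 2 (by norm_num) (by norm_num) (by norm_num)]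
  rw [word_series d hd 2 0 2 0 2 0 (by norm_num) (by norm_num) (by norm_num)]
  rw [word_series d hd 1 1 2 0 2 1 (by norm_num) (by norm_num) (by norm_num)]
  rw [word_series d hd 0 2 2 0 2 2 (by norm_num) (by norm_num) (by norm_num)]
  rw [word_series d hd 2 1 0 1 0 0 (by norm_num) (by norm_num) (by norm_num)]
  rw [word_series d hd 1 2 0 1 0 1 (by norm_num) (by norm_num) (by norm_num)]
  rw [word_series d hd 0 0 0 1 0 2 (by norm_num) (by norm_num) (by norm_num)]
  rw [word_series d hd 0 1 1 1 1 0 (by norm_num) (by norm_num) (by norm_num)]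
  rw [word_series d hd 2 2 1 1 1 1 (by norm_num) (by norm_num) (by norm_num)]
  rw [word_series d hd 1 0 1 1 1 2 (by norm_num) (by norm_num) (by norm_num)]
  rw [word_series d hd 1 1 2 1 2 0 (by norm_num) (by norm_num) (by norm_num)]
  rw [word_series d hd 0 2 2 1 2 1 (by norm_num) (by norm_num) (by norm_num)]
  rw [word_series d hd 2 0 2 1 2 2 (by norm_num) (by norm_num) (by norm_num)]
  rw [word_series d hd 1 2 0 2 0 0 (by norm_num) (by norm_num) (by norm_num)]
  rw [word_series d hd 0 0 0 2 0 1 (by norm_num) (by norm_num) (by norm_num)]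
  rw [word_series d hd 2 1 0 2 0 2 (by norm_num) (by norm_num) (by norm_num)]
  rw [word_series d hd 2 2 1 2 1 0 (by norm_num) (by norm_num) (by norm_num)]
  rw [word_series d hd 1 0 1 2 1 1 (by norm_num) (by norm_num) (by norm_num)]
  rw [word_series d hd 0 1 1 2 1 2 (by norm_num) (by norm_num) (by norm_num)]
  rw [word_series d hd 0 2 2 2 2 0 (by norm_num) (by norm_num) (by norm_num)]
  rw [word_series d hd 2 0 2 2 2 1 (by norm_num) (by norm_num) (by norm_num)]
  rw [word_series d hd 1 1 2 2 2 2 (by norm_num) (by norm_num) (by norm_num)]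
  ext k
  simp only [map_add, PowerSeries.coeff_mk]
  rw [split3 hd PC2c (fun v : V6 => v.2.1.2) k]
  rw [split3 hd (fun v : V6 => PC2c v ∧ v.2.1.2 % 3 = 0) (fun v : V6 => v.2.2.1) k]
  rw [split3 hd (fun v : V6 => PC2c v ∧ v.2.1.2 % 3 = 1) (fun v : V6 => v.2.2.1) k]
  rw [split3 hd (fun v : V6 => PC2c v ∧ v.2.1.2 % 3 = 2) (fun v : V6 => v.2.2.1) k]
  rw [split3 hd (fun v : V6 => (PC2c v ∧ v.2.1.2 % 3 = 0) ∧ v.2.2.1 % 3 = 0) (fun v : V6 => v.2.2.2) k]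
  rw [split3 hd (fun v : V6 => (PC2c v ∧ v.2.1.2 % 3 = 0) ∧ v.2.2.1 % 3 = 1) (fun v : V6 => v.2.2.2) k]
  rw [split3 hd (fun v : V6 => (PC2c v ∧ v.2.1.2 % 3 = 0) ∧ v.2.2.1 % 3 = 2) (fun v : V6 => v.2.2.2) k]
  rw [split3 hd (fun v : V6 => (PC2c v ∧ v.2.1.2 % 3 = 1) ∧ v.2.2.1 % 3 = 0) (fun v : V6 => v.2.2.2) k]
  rw [split3 hd (fun v : V6 => (PC2c v ∧ v.2.1.2 % 3 = 1) ∧ v.2.2.1 % 3 = 1) (fun v : V6 => v.2.2.2) k]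
  rw [split3 hd (fun v : V6 => (PC2c v ∧ v.2.1.2 % 3 = 1) ∧ v.2.2.1 % 3 = 2) (fun v : V6 => v.2.2.2) k]
  rw [split3 hd (fun v : V6 => (PC2c v ∧ v.2.1.2 % 3 = 2) ∧ v.2.2.1 % 3 = 0) (fun v : V6 => v.2.2.2) k]
  rw [split3 hd (fun v : V6 => (PC2c v ∧ v.2.1.2 % 3 = 2) ∧ v.2.2.1 % 3 = 1) (fun v : V6 => v.2.2.2) k]
  rw [split3 hd (fun v : V6 => (PC2c v ∧ v.2.1.2 % 3 = 2) ∧ v.2.2.1 % 3 = 2) (fun v : V6 => v.2.2.2) k]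
  rw [show {v : V6 | (((PC2c v ∧ v.2.1.2 % 3 = 0) ∧ v.2.2.1 % 3 = 0) ∧ v.2.2.2 % 3 = 0) ∧ qV d v = (k : ℤ)}
      = {v : V6 | (v.1.1 % 3 = 0 ∧ v.1.2 % 3 = 0 ∧ v.2.1.1 % 3 = 0 ∧ v.2.1.2 % 3 = 0 ∧ v.2.2.1 % 3 = 0 ∧ v.2.2.2 % 3 = 0) ∧ qV d v = (k : ℤ)} from by
    ext v; simp only [Set.mem_setOf_eq, PC2c]; constructor <;> rintro ⟨h1, h2⟩ <;>
      exact ⟨by omega, h2⟩]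
  rw [show {v : V6 | (((PC2c v ∧ v.2.1.2 % 3 = 0) ∧ v.2.2.1 % 3 = 0) ∧ v.2.2.2 % 3 = 1) ∧ qV d v = (k : ℤ)}
      = {v : V6 | (v.1.1 % 3 = 2 ∧ v.1.2 % 3 = 1 ∧ v.2.1.1 % 3 = 0 ∧ v.2.1.2 % 3 = 0 ∧ v.2.2.1 % 3 = 0 ∧ v.2.2.2 % 3 = 1) ∧ qV d v = (k : ℤ)} from by
    ext v; simp only [Set.mem_setOf_eq, PC2c]; constructor <;> rintro ⟨h1, h2⟩ <;>
      exact ⟨by omega, h2⟩]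
  rw [show {v : V6 | (((PC2c v ∧ v.2.1.2 % 3 = 0) ∧ v.2.2.1 % 3 = 0) ∧ v.2.2.2 % 3 = 2) ∧ qV d v = (k : ℤ)}
      = {v : V6 | (v.1.1 % 3 = 1 ∧ v.1.2 % 3 = 2 ∧ v.2.1.1 % 3 = 0 ∧ v.2.1.2 % 3 = 0 ∧ v.2.2.1 % 3 = 0 ∧ v.2.2.2 % 3 = 2) ∧ qV d v = (k : ℤ)} from by
    ext v; simp only [Set.mem_setOf_eq, PC2c]; constructor <;> rintro ⟨h1, h2⟩ <;>
      exact ⟨by omega, h2⟩]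
  rw [show {v : V6 | (((PC2c v ∧ v.2.1.2 % 3 = 0) ∧ v.2.2.1 % 3 = 1) ∧ v.2.2.2 % 3 = 0) ∧ qV d v = (k : ℤ)}
      = {v : V6 | (v.1.1 % 3 = 1 ∧ v.1.2 % 3 = 0 ∧ v.2.1.1 % 3 = 1 ∧ v.2.1.2 % 3 = 0 ∧ v.2.2.1 % 3 = 1 ∧ v.2.2.2 % 3 = 0) ∧ qV d v = (k : ℤ)} from by
    ext v; simp only [Set.mem_setOf_eq, PC2c]; constructor <;> rintro ⟨h1, h2⟩ <;>
      exact ⟨by omega, h2⟩]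
  rw [show {v : V6 | (((PC2c v ∧ v.2.1.2 % 3 = 0) ∧ v.2.2.1 % 3 = 1) ∧ v.2.2.2 % 3 = 1) ∧ qV d v = (k : ℤ)}
      = {v : V6 | (v.1.1 % 3 = 0 ∧ v.1.2 % 3 = 1 ∧ v.2.1.1 % 3 = 1 ∧ v.2.1.2 % 3 = 0 ∧ v.2.2.1 % 3 = 1 ∧ v.2.2.2 % 3 = 1) ∧ qV d v = (k : ℤ)} from by
    ext v; simp only [Set.mem_setOf_eq, PC2c]; constructor <;> rintro ⟨h1, h2⟩ <;>
      exact ⟨by omega, h2⟩]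
  rw [show {v : V6 | (((PC2c v ∧ v.2.1.2 % 3 = 0) ∧ v.2.2.1 % 3 = 1) ∧ v.2.2.2 % 3 = 2) ∧ qV d v = (k : ℤ)}
      = {v : V6 | (v.1.1 % 3 = 2 ∧ v.1.2 % 3 = 2 ∧ v.2.1.1 % 3 = 1 ∧ v.2.1.2 % 3 = 0 ∧ v.2.2.1 % 3 = 1 ∧ v.2.2.2 % 3 = 2) ∧ qV d v = (k : ℤ)} from by
    ext v; simp only [Set.mem_setOf_eq, PC2c]; constructor <;> rintro ⟨h1, h2⟩ <;>
      exact ⟨by omega, h2⟩]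
  rw [show {v : V6 | (((PC2c v ∧ v.2.1.2 % 3 = 0) ∧ v.2.2.1 % 3 = 2) ∧ v.2.2.2 % 3 = 0) ∧ qV d v = (k : ℤ)}
      = {v : V6 | (v.1.1 % 3 = 2 ∧ v.1.2 % 3 = 0 ∧ v.2.1.1 % 3 = 2 ∧ v.2.1.2 % 3 = 0 ∧ v.2.2.1 % 3 = 2 ∧ v.2.2.2 % 3 = 0) ∧ qV d v = (k : ℤ)} from by
    ext v; simp only [Set.mem_setOf_eq, PC2c]; constructor <;> rintro ⟨h1, h2⟩ <;>
      exact ⟨by omega, h2⟩]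
  rw [show {v : V6 | (((PC2c v ∧ v.2.1.2 % 3 = 0) ∧ v.2.2.1 % 3 = 2) ∧ v.2.2.2 % 3 = 1) ∧ qV d v = (k : ℤ)}
      = {v : V6 | (v.1.1 % 3 = 1 ∧ v.1.2 % 3 = 1 ∧ v.2.1.1 % 3 = 2 ∧ v.2.1.2 % 3 = 0 ∧ v.2.2.1 % 3 = 2 ∧ v.2.2.2 % 3 = 1) ∧ qV d v = (k : ℤ)} from by
    ext v; simp only [Set.mem_setOf_eq, PC2c]; constructor <;> rintro ⟨h1, h2⟩ <;>
      exact ⟨by omega, h2⟩]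
  rw [show {v : V6 | (((PC2c v ∧ v.2.1.2 % 3 = 0) ∧ v.2.2.1 % 3 = 2) ∧ v.2.2.2 % 3 = 2) ∧ qV d v = (k : ℤ)}
      = {v : V6 | (v.1.1 % 3 = 0 ∧ v.1.2 % 3 = 2 ∧ v.2.1.1 % 3 = 2 ∧ v.2.1.2 % 3 = 0 ∧ v.2.2.1 % 3 = 2 ∧ v.2.2.2 % 3 = 2) ∧ qV d v = (k : ℤ)} from by
    ext v; simp only [Set.mem_setOf_eq, PC2c]; constructor <;> rintro ⟨h1, h2⟩ <;>
      exact ⟨by omega, h2⟩]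
  rw [show {v : V6 | (((PC2c v ∧ v.2.1.2 % 3 = 1) ∧ v.2.2.1 % 3 = 0) ∧ v.2.2.2 % 3 = 0) ∧ qV d v = (k : ℤ)}
      = {v : V6 | (v.1.1 % 3 = 2 ∧ v.1.2 % 3 = 1 ∧ v.2.1.1 % 3 = 0 ∧ v.2.1.2 % 3 = 1 ∧ v.2.2.1 % 3 = 0 ∧ v.2.2.2 % 3 = 0) ∧ qV d v = (k : ℤ)} from by
    ext v; simp only [Set.mem_setOf_eq, PC2c]; constructor <;> rintro ⟨h1, h2⟩ <;>
      exact ⟨by omega, h2⟩]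
  rw [show {v : V6 | (((PC2c v ∧ v.2.1.2 % 3 = 1) ∧ v.2.2.1 % 3 = 0) ∧ v.2.2.2 % 3 = 1) ∧ qV d v = (k : ℤ)}
      = {v : V6 | (v.1.1 % 3 = 1 ∧ v.1.2 % 3 = 2 ∧ v.2.1.1 % 3 = 0 ∧ v.2.1.2 % 3 = 1 ∧ v.2.2.1 % 3 = 0 ∧ v.2.2.2 % 3 = 1) ∧ qV d v = (k : ℤ)} from by
    ext v; simp only [Set.mem_setOf_eq, PC2c]; constructor <;> rintro ⟨h1, h2⟩ <;>
      exact ⟨by omega, h2⟩]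
  rw [show {v : V6 | (((PC2c v ∧ v.2.1.2 % 3 = 1) ∧ v.2.2.1 % 3 = 0) ∧ v.2.2.2 % 3 = 2) ∧ qV d v = (k : ℤ)}
      = {v : V6 | (v.1.1 % 3 = 0 ∧ v.1.2 % 3 = 0 ∧ v.2.1.1 % 3 = 0 ∧ v.2.1.2 % 3 = 1 ∧ v.2.2.1 % 3 = 0 ∧ v.2.2.2 % 3 = 2) ∧ qV d v = (k : ℤ)} from by
    ext v; simp only [Set.mem_setOf_eq, PC2c]; constructor <;> rintro ⟨h1, h2⟩ <;>
      exact ⟨by omega, h2⟩]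
  rw [show {v : V6 | (((PC2c v ∧ v.2.1.2 % 3 = 1) ∧ v.2.2.1 % 3 = 1) ∧ v.2.2.2 % 3 = 0) ∧ qV d v = (k : ℤ)}
      = {v : V6 | (v.1.1 % 3 = 0 ∧ v.1.2 % 3 = 1 ∧ v.2.1.1 % 3 = 1 ∧ v.2.1.2 % 3 = 1 ∧ v.2.2.1 % 3 = 1 ∧ v.2.2.2 % 3 = 0) ∧ qV d v = (k : ℤ)} from by
    ext v; simp only [Set.mem_setOf_eq, PC2c]; constructor <;> rintro ⟨h1, h2⟩ <;>
      exact ⟨by omega, h2⟩]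
  rw [show {v : V6 | (((PC2c v ∧ v.2.1.2 % 3 = 1) ∧ v.2.2.1 % 3 = 1) ∧ v.2.2.2 % 3 = 1) ∧ qV d v = (k : ℤ)}
      = {v : V6 | (v.1.1 % 3 = 2 ∧ v.1.2 % 3 = 2 ∧ v.2.1.1 % 3 = 1 ∧ v.2.1.2 % 3 = 1 ∧ v.2.2.1 % 3 = 1 ∧ v.2.2.2 % 3 = 1) ∧ qV d v = (k : ℤ)} from by
    ext v; simp only [Set.mem_setOf_eq, PC2c]; constructor <;> rintro ⟨h1, h2⟩ <;>
      exact ⟨by omega, h2⟩]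
  rw [show {v : V6 | (((PC2c v ∧ v.2.1.2 % 3 = 1) ∧ v.2.2.1 % 3 = 1) ∧ v.2.2.2 % 3 = 2) ∧ qV d v = (k : ℤ)}
      = {v : V6 | (v.1.1 % 3 = 1 ∧ v.1.2 % 3 = 0 ∧ v.2.1.1 % 3 = 1 ∧ v.2.1.2 % 3 = 1 ∧ v.2.2.1 % 3 = 1 ∧ v.2.2.2 % 3 = 2) ∧ qV d v = (k : ℤ)} from by
    ext v; simp only [Set.mem_setOf_eq, PC2c]; constructor <;> rintro ⟨h1, h2⟩ <;>
      exact ⟨by omega, h2⟩]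
  rw [show {v : V6 | (((PC2c v ∧ v.2.1.2 % 3 = 1) ∧ v.2.2.1 % 3 = 2) ∧ v.2.2.2 % 3 = 0) ∧ qV d v = (k : ℤ)}
      = {v : V6 | (v.1.1 % 3 = 1 ∧ v.1.2 % 3 = 1 ∧ v.2.1.1 % 3 = 2 ∧ v.2.1.2 % 3 = 1 ∧ v.2.2.1 % 3 = 2 ∧ v.2.2.2 % 3 = 0) ∧ qV d v = (k : ℤ)} from by
    ext v; simp only [Set.mem_setOf_eq, PC2c]; constructor <;> rintro ⟨h1, h2⟩ <;>
      exact ⟨by omega, h2⟩]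
  rw [show {v : V6 | (((PC2c v ∧ v.2.1.2 % 3 = 1) ∧ v.2.2.1 % 3 = 2) ∧ v.2.2.2 % 3 = 1) ∧ qV d v = (k : ℤ)}
      = {v : V6 | (v.1.1 % 3 = 0 ∧ v.1.2 % 3 = 2 ∧ v.2.1.1 % 3 = 2 ∧ v.2.1.2 % 3 = 1 ∧ v.2.2.1 % 3 = 2 ∧ v.2.2.2 % 3 = 1) ∧ qV d v = (k : ℤ)} from by
    ext v; simp only [Set.mem_setOf_eq, PC2c]; constructor <;> rintro ⟨h1, h2⟩ <;>
      exact ⟨by omega, h2⟩]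
  rw [show {v : V6 | (((PC2c v ∧ v.2.1.2 % 3 = 1) ∧ v.2.2.1 % 3 = 2) ∧ v.2.2.2 % 3 = 2) ∧ qV d v = (k : ℤ)}
      = {v : V6 | (v.1.1 % 3 = 2 ∧ v.1.2 % 3 = 0 ∧ v.2.1.1 % 3 = 2 ∧ v.2.1.2 % 3 = 1 ∧ v.2.2.1 % 3 = 2 ∧ v.2.2.2 % 3 = 2) ∧ qV d v = (k : ℤ)} from by
    ext v; simp only [Set.mem_setOf_eq, PC2c]; constructor <;> rintro ⟨h1, h2⟩ <;>
      exact ⟨by omega, h2⟩]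
  rw [show {v : V6 | (((PC2c v ∧ v.2.1.2 % 3 = 2) ∧ v.2.2.1 % 3 = 0) ∧ v.2.2.2 % 3 = 0) ∧ qV d v = (k : ℤ)}
      = {v : V6 | (v.1.1 % 3 = 1 ∧ v.1.2 % 3 = 2 ∧ v.2.1.1 % 3 = 0 ∧ v.2.1.2 % 3 = 2 ∧ v.2.2.1 % 3 = 0 ∧ v.2.2.2 % 3 = 0) ∧ qV d v = (k : ℤ)} from by
    ext v; simp only [Set.mem_setOf_eq, PC2c]; constructor <;> rintro ⟨h1, h2⟩ <;>
      exact ⟨by omega, h2⟩]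
  rw [show {v : V6 | (((PC2c v ∧ v.2.1.2 % 3 = 2) ∧ v.2.2.1 % 3 = 0) ∧ v.2.2.2 % 3 = 1) ∧ qV d v = (k : ℤ)}
      = {v : V6 | (v.1.1 % 3 = 0 ∧ v.1.2 % 3 = 0 ∧ v.2.1.1 % 3 = 0 ∧ v.2.1.2 % 3 = 2 ∧ v.2.2.1 % 3 = 0 ∧ v.2.2.2 % 3 = 1) ∧ qV d v = (k : ℤ)} from by
    ext v; simp only [Set.mem_setOf_eq, PC2c]; constructor <;> rintro ⟨h1, h2⟩ <;>
      exact ⟨by omega, h2⟩]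
  rw [show {v : V6 | (((PC2c v ∧ v.2.1.2 % 3 = 2) ∧ v.2.2.1 % 3 = 0) ∧ v.2.2.2 % 3 = 2) ∧ qV d v = (k : ℤ)}
      = {v : V6 | (v.1.1 % 3 = 2 ∧ v.1.2 % 3 = 1 ∧ v.2.1.1 % 3 = 0 ∧ v.2.1.2 % 3 = 2 ∧ v.2.2.1 % 3 = 0 ∧ v.2.2.2 % 3 = 2) ∧ qV d v = (k : ℤ)} from by
    ext v; simp only [Set.mem_setOf_eq, PC2c]; constructor <;> rintro ⟨h1, h2⟩ <;>
      exact ⟨by omega, h2⟩]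
  rw [show {v : V6 | (((PC2c v ∧ v.2.1.2 % 3 = 2) ∧ v.2.2.1 % 3 = 1) ∧ v.2.2.2 % 3 = 0) ∧ qV d v = (k : ℤ)}
      = {v : V6 | (v.1.1 % 3 = 2 ∧ v.1.2 % 3 = 2 ∧ v.2.1.1 % 3 = 1 ∧ v.2.1.2 % 3 = 2 ∧ v.2.2.1 % 3 = 1 ∧ v.2.2.2 % 3 = 0) ∧ qV d v = (k : ℤ)} from by
    ext v; simp only [Set.mem_setOf_eq, PC2c]; constructor <;> rintro ⟨h1, h2⟩ <;>
      exact ⟨by omega, h2⟩]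
  rw [show {v : V6 | (((PC2c v ∧ v.2.1.2 % 3 = 2) ∧ v.2.2.1 % 3 = 1) ∧ v.2.2.2 % 3 = 1) ∧ qV d v = (k : ℤ)}
      = {v : V6 | (v.1.1 % 3 = 1 ∧ v.1.2 % 3 = 0 ∧ v.2.1.1 % 3 = 1 ∧ v.2.1.2 % 3 = 2 ∧ v.2.2.1 % 3 = 1 ∧ v.2.2.2 % 3 = 1) ∧ qV d v = (k : ℤ)} from by
    ext v; simp only [Set.mem_setOf_eq, PC2c]; constructor <;> rintro ⟨h1, h2⟩ <;>
      exact ⟨by omega, h2⟩]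
  rw [show {v : V6 | (((PC2c v ∧ v.2.1.2 % 3 = 2) ∧ v.2.2.1 % 3 = 1) ∧ v.2.2.2 % 3 = 2) ∧ qV d v = (k : ℤ)}
      = {v : V6 | (v.1.1 % 3 = 0 ∧ v.1.2 % 3 = 1 ∧ v.2.1.1 % 3 = 1 ∧ v.2.1.2 % 3 = 2 ∧ v.2.2.1 % 3 = 1 ∧ v.2.2.2 % 3 = 2) ∧ qV d v = (k : ℤ)} from by
    ext v; simp only [Set.mem_setOf_eq, PC2c]; constructor <;> rintro ⟨h1, h2⟩ <;>
      exact ⟨by omega, h2⟩]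
  rw [show {v : V6 | (((PC2c v ∧ v.2.1.2 % 3 = 2) ∧ v.2.2.1 % 3 = 2) ∧ v.2.2.2 % 3 = 0) ∧ qV d v = (k : ℤ)}
      = {v : V6 | (v.1.1 % 3 = 0 ∧ v.1.2 % 3 = 2 ∧ v.2.1.1 % 3 = 2 ∧ v.2.1.2 % 3 = 2 ∧ v.2.2.1 % 3 = 2 ∧ v.2.2.2 % 3 = 0) ∧ qV d v = (k : ℤ)} from by
    ext v; simp only [Set.mem_setOf_eq, PC2c]; constructor <;> rintro ⟨h1, h2⟩ <;>
      exact ⟨by omega, h2⟩]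
  rw [show {v : V6 | (((PC2c v ∧ v.2.1.2 % 3 = 2) ∧ v.2.2.1 % 3 = 2) ∧ v.2.2.2 % 3 = 1) ∧ qV d v = (k : ℤ)}
      = {v : V6 | (v.1.1 % 3 = 2 ∧ v.1.2 % 3 = 0 ∧ v.2.1.1 % 3 = 2 ∧ v.2.1.2 % 3 = 2 ∧ v.2.2.1 % 3 = 2 ∧ v.2.2.2 % 3 = 1) ∧ qV d v = (k : ℤ)} from by
    ext v; simp only [Set.mem_setOf_eq, PC2c]; constructor <;> rintro ⟨h1, h2⟩ <;>
      exact ⟨by omega, h2⟩]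
  rw [show {v : V6 | (((PC2c v ∧ v.2.1.2 % 3 = 2) ∧ v.2.2.1 % 3 = 2) ∧ v.2.2.2 % 3 = 2) ∧ qV d v = (k : ℤ)}
      = {v : V6 | (v.1.1 % 3 = 1 ∧ v.1.2 % 3 = 1 ∧ v.2.1.1 % 3 = 2 ∧ v.2.1.2 % 3 = 2 ∧ v.2.2.1 % 3 = 2 ∧ v.2.2.2 % 3 = 2) ∧ qV d v = (k : ℤ)} from by
    ext v; simp only [Set.mem_setOf_eq, PC2c]; constructor <;> rintro ⟨h1, h2⟩ <;>
      exact ⟨by omega, h2⟩]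
  push_cast
  ring


lemma Q6_ge6 (x y : ℤ) (hy : y % 3 ≠ 0) : 6 ≤ Qform 6 x y := by
  have hy1 : 1 ≤ y * y := by
    rcases (by omega : y ≤ -1 ∨ 1 ≤ y) with h | h <;> nlinarith
  have h2 : 11 ≤ 2 * Qform 6 x y := by
    unfold Qform; push_cast; nlinarith [sq_nonneg x, sq_nonneg (x + y)]
  omega

lemma Q6_ge1 (x y : ℤ) (hx : x % 3 ≠ 0) : 1 ≤ Qform 6 x y := by
  have hx1 : 1 ≤ x * x := by
    rcases (by omega : x ≤ -1 ∨ 1 ≤ x) with h | h <;> nlinarith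
  have h2 : 1 ≤ 2 * Qform 6 x y := by
    unfold Qform; push_cast; nlinarith [sq_nonneg (x + y), sq_nonneg y]
  omega

lemma Q6_eq1 (x y : ℤ) (h : Qform 6 x y = 1) : (x = 1 ∨ x = -1) ∧ y = 0 := by
  have h' : x ^ 2 + x * y + 6 * y ^ 2 = 1 := by
    unfold Qform at h; push_cast at h; linarith
  have hy2 : y * y ≤ 0 := by nlinarith [sq_nonneg x, sq_nonneg (x + y)]
  have hy : y = 0 := by nlinarith [mul_self_nonneg y]
  subst hy
  have hx : (x - 1) * (x + 1) = 0 := by nlinarith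
  rcases mul_eq_zero.mp hx with h1 | h1
  · exact ⟨Or.inl (by omega), rfl⟩
  · exact ⟨Or.inr (by omega), rfl⟩

lemma Q9div (d : ℕ) (x y : ℤ) (hx : x % 3 = 0) (hy : y % 3 = 0) :
    ∃ t, Qform d x y = 9 * t := by
  obtain ⟨a, rfl⟩ : ∃ a, x = 3 * a := ⟨x / 3, by omega⟩
  obtain ⟨b, rfl⟩ : ∃ b, y = 3 * b := ⟨y / 3, by omega⟩
  exact ⟨a ^ 2 + a * b + d * b ^ 2, by unfold Qform; ring⟩

lemma S1empty6 : {v : V6 | PC1c v ∧ qV 6 v = (3 : ℤ)} = ∅ := by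
  ext v
  simp only [Set.mem_setOf_eq, Set.mem_empty_iff_false, iff_false, not_and, PC1c, qV, Qf]
  rintro ⟨p1, p2, p3⟩ hq
  have n1 : 0 ≤ Qform 6 v.1.1 v.1.2 := Qform_nonneg (by norm_num) _ _
  have n2 : 0 ≤ Qform 6 v.2.1.1 v.2.1.2 := Qform_nonneg (by norm_num) _ _
  have n3 : 0 ≤ Qform 6 v.2.2.1 v.2.2.2 := Qform_nonneg (by norm_num) _ _
  by_cases hy1 : v.1.2 % 3 = 0
  · by_cases hy2 : v.2.1.2 % 3 = 0
    · by_cases hy3 : v.2.2.2 % 3 = 0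
      · obtain ⟨t1, ht1⟩ := Q9div 6 v.1.1 v.1.2 (by omega) hy1
        obtain ⟨t2, ht2⟩ := Q9div 6 v.2.1.1 v.2.1.2 (by omega) hy2
        obtain ⟨t3, ht3⟩ := Q9div 6 v.2.2.1 v.2.2.2 (by omega) hy3
        omega
      · have := Q6_ge6 v.2.2.1 v.2.2.2 hy3; omega
    · have := Q6_ge6 v.2.1.1 v.2.1.2 hy2; omega
  · have := Q6_ge6 v.1.1 v.1.2 hy1; omega

lemma S2pair6 : {v : V6 | PC2c v ∧ qV 6 v = (3 : ℤ)}
    = {((1, 0), (1, 0), 1, 0), ((-1, 0), (-1, 0), -1, 0)} := by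
  ext v
  simp only [Set.mem_setOf_eq, Set.mem_insert_iff, Set.mem_singleton_iff, PC2c, qV, Qf]
  constructor
  · rintro ⟨⟨p1, p2, p3⟩, hq⟩
    have n1 : 0 ≤ Qform 6 v.1.1 v.1.2 := Qform_nonneg (by norm_num) _ _
    have n2 : 0 ≤ Qform 6 v.2.1.1 v.2.1.2 := Qform_nonneg (by norm_num) _ _
    have n3 : 0 ≤ Qform 6 v.2.2.1 v.2.2.2 := Qform_nonneg (by norm_num) _ _
    have hy1 : v.1.2 % 3 = 0 := by
      by_contra hc; have := Q6_ge6 v.1.1 v.1.2 hc; omega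
    have hy2 : v.2.1.2 % 3 = 0 := by
      by_contra hc; have := Q6_ge6 v.2.1.1 v.2.1.2 hc; omega
    have hy3 : v.2.2.2 % 3 = 0 := by
      by_contra hc; have := Q6_ge6 v.2.2.1 v.2.2.2 hc; omega
    rcases (by omega : v.2.2.1 % 3 = 0 ∨ v.2.2.1 % 3 = 1 ∨ v.2.2.1 % 3 = 2) with h5 | h5 | h5
    · exfalso
      obtain ⟨t1, ht1⟩ := Q9div 6 v.1.1 v.1.2 (by omega) hy1
      obtain ⟨t2, ht2⟩ := Q9div 6 v.2.1.1 v.2.1.2 (by omega) hy2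
      obtain ⟨t3, ht3⟩ := Q9div 6 v.2.2.1 v.2.2.2 h5 hy3
      omega
    · left
      have g1 : 1 ≤ Qform 6 v.1.1 v.1.2 := Q6_ge1 _ _ (by omega)
      have g2 : 1 ≤ Qform 6 v.2.1.1 v.2.1.2 := Q6_ge1 _ _ (by omega)
      have g3 : 1 ≤ Qform 6 v.2.2.1 v.2.2.2 := Q6_ge1 _ _ (by omega)
      obtain ⟨e1, e2⟩ := Q6_eq1 v.1.1 v.1.2 (by omega)
      obtain ⟨e3, e4⟩ := Q6_eq1 v.2.1.1 v.2.1.2 (by omega)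
      obtain ⟨e5, e6⟩ := Q6_eq1 v.2.2.1 v.2.2.2 (by omega)
      have x1 : v.1.1 = 1 := by rcases e1 with h | h <;> omega
      have x3 : v.2.1.1 = 1 := by rcases e3 with h | h <;> omega
      have x5 : v.2.2.1 = 1 := by rcases e5 with h | h <;> omega
      simp only [Prod.ext_iff]
      exact ⟨⟨x1, e2⟩, ⟨x3, e4⟩, x5, e6⟩
    · right
      have g1 : 1 ≤ Qform 6 v.1.1 v.1.2 := Q6_ge1 _ _ (by omega)
      have g2 : 1 ≤ Qform 6 v.2.1.1 v.2.1.2 := Q6_ge1 _ _ (by omega)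
      have g3 : 1 ≤ Qform 6 v.2.2.1 v.2.2.2 := Q6_ge1 _ _ (by omega)
      obtain ⟨e1, e2⟩ := Q6_eq1 v.1.1 v.1.2 (by omega)
      obtain ⟨e3, e4⟩ := Q6_eq1 v.2.1.1 v.2.1.2 (by omega)
      obtain ⟨e5, e6⟩ := Q6_eq1 v.2.2.1 v.2.2.2 (by omega)
      have x1 : v.1.1 = -1 := by rcases e1 with h | h <;> omega
      have x3 : v.2.1.1 = -1 := by rcases e3 with h | h <;> omega
      have x5 : v.2.2.1 = -1 := by rcases e5 with h | h <;> omega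
      simp only [Prod.ext_iff]
      exact ⟨⟨x1, e2⟩, ⟨x3, e4⟩, x5, e6⟩
  · rintro (rfl | rfl) <;>
      exact ⟨by norm_num [PC2c], by norm_num [qV, Qf, Qform]⟩



theorem stmt17 :
    P1 ≠ P2 ∧
    MvPolynomial.aeval (T3 3) P1 = MvPolynomial.aeval (T3 3) P2 ∧
    MvPolynomial.aeval (T3 6) P1 ≠ MvPolynomial.aeval (T3 6) P2 := by
  refine ⟨?_, ?_, ?_⟩
  · intro h
    have h2 := congrArg (MvPolynomial.eval (fun i : Fin 4 => if i = 1 then (1 : ℤ) else 0)) h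
    simp [P1, P2] at h2
  · rw [code1_series 3 (by norm_num), code2_series 3 (by norm_num)]
    ext k
    simp only [PowerSeries.coeff_mk]
    exact_mod_cast bij3 k
  · intro h
    rw [code1_series 6 (by norm_num), code2_series 6 (by norm_num)] at h
    have h3 := congrArg (PowerSeries.coeff 3) h
    simp only [PowerSeries.coeff_mk, Nat.cast_ofNat] at h3
    rw [S1empty6, S2pair6] at h3
    rw [Set.ncard_empty, Set.ncard_pair (by norm_num [Prod.ext_iff])] at h3
    norm_num at h3
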